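/- arXiv:2104.08264 — 2 statements merged into one kernel-verified Lean document; each statement's English description precedes it below -/
import Mathlib

section
/- Fix integers k ≥ 0 and n ≥ k+4, and let A be a real symmetric matrix indexed by the 2-element subsets of [n] that is S_{n−k}-invariant (i.e., A_{σ·e,σ·f} = A_{e,f} for all σ ∈ S_{n−k} and all 2-subsets e, f of [n]). Then A is positive semidefinite if and only if the three matrices U_1ᵀ A U_1, U_2ᵀ A U_2 and U_3ᵀ A U_3 are positive semidefinite. -/
open Finset Matrix

/-- The 2-element subsets ("edges") of `[n] = {1,…,n}`, modeled inside `ℕ`. -/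
def edgesN (n : ℕ) : Finset (Finset ℕ) := (Finset.Icc 1 n).powersetCard 2

/-- `σ` belongs to the subgroup `S_{n-k} ≤ S_n` (inside `Perm ℕ`): it fixes every
element of `[k]` pointwise and every element outside `[n]`. -/
def FixPerm (n k : ℕ) (σ : Equiv.Perm ℕ) : Prop :=
  (∀ i ∈ Finset.Icc 1 k, σ i = i) ∧ (∀ i, i ∉ Finset.Icc 1 n → σ i = i)

/-- The action of a permutation of `[n]` on an edge (2-subset) of `[n]`. -/
def permEdge (n : ℕ) (σ : Equiv.Perm ℕ) (g : ↥(edgesN n)) : ↥(edgesN n) :=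
  if h : g.1.image σ ∈ edgesN n then ⟨g.1.image σ, h⟩ else g

/-- The standard basis vector `v_e` of `ℝ^{edgesN n}` (extended by `e : Finset ℕ`). -/
def vN (n : ℕ) (e : Finset ℕ) : ↥(edgesN n) → ℝ := fun g => if g.1 = e then 1 else 0

/-- The matrix `U₁` whose columns are the vectors `u_{1,1}, …, u_{1,C(k,2)+k+1}`:
`v_e` for the 2-subsets `e` of `[k]`; `Σ_{i=k+1}^n v_{{j,i}}` for `j ∈ [k]`; and
`Σ_{k+1≤i<j≤n} v_{{i,j}}`. -/
noncomputable def U1 (k n : ℕ) :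
    Matrix ↥(edgesN n) (↥(edgesN k) ⊕ ↥(Finset.Icc 1 k) ⊕ Unit) ℝ :=
  Matrix.of fun g c => match c with
  | .inl e => vN n e.1 g
  | .inr (.inl j) => ∑ i ∈ Finset.Icc (k+1) n, vN n {j.1, i} g
  | .inr (.inr _) => ∑ e ∈ (Finset.Icc (k+1) n).powersetCard 2, vN n e g

/-- The matrix `U₂` whose columns are `u_{2,1}, …, u_{2,k+1}`:
`v_{{j,k+1}} − v_{{j,k+2}}` for `j ∈ [k]`, and `Σ_{i=k+3}^n (v_{{k+1,i}} − v_{{k+2,i}})`. -/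
noncomputable def U2 (k n : ℕ) : Matrix ↥(edgesN n) (↥(Finset.Icc 1 k) ⊕ Unit) ℝ :=
  Matrix.of fun g c => match c with
  | .inl j => vN n {j.1, k+1} g - vN n {j.1, k+2} g
  | .inr _ => ∑ i ∈ Finset.Icc (k+3) n, (vN n {k+1, i} g - vN n {k+2, i} g)

/-- The one-column matrix `U₃` with column
`u_{3,1} = v_{{k+1,k+2}} − v_{{k+1,k+3}} − v_{{k+2,k+4}} + v_{{k+3,k+4}}`. -/
noncomputable def U3 (k n : ℕ) : Matrix ↥(edgesN n) Unit ℝ :=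
  Matrix.of fun g _ =>
    vN n {k+1, k+2} g - vN n {k+1, k+3} g - vN n {k+2, k+4} g + vN n {k+3, k+4} g

namespace PSDaux

variable {k n : ℕ}

theorem fixperm_one : FixPerm n k 1 := ⟨fun _ _ => rfl, fun _ _ => rfl⟩

theorem fixperm_mul {σ τ : Equiv.Perm ℕ} (hσ : FixPerm n k σ) (hτ : FixPerm n k τ) :
    FixPerm n k (σ * τ) := by
  constructor
  · intro i hi; simp [Equiv.Perm.mul_apply, hτ.1 i hi, hσ.1 i hi]
  · intro i hi; simp [Equiv.Perm.mul_apply, hτ.2 i hi, hσ.2 i hi]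

theorem fixperm_inv {σ : Equiv.Perm ℕ} (hσ : FixPerm n k σ) : FixPerm n k σ⁻¹ := by
  constructor
  · intro i hi
    have h := hσ.1 i hi
    exact Equiv.Perm.inv_eq_iff_eq.mpr h.symm
  · intro i hi
    have h := hσ.2 i hi
    exact Equiv.Perm.inv_eq_iff_eq.mpr h.symm

theorem fixperm_swap {a b : ℕ} (ha : a ∈ Finset.Icc (k+1) n) (hb : b ∈ Finset.Icc (k+1) n) :
    FixPerm n k (Equiv.swap a b) := by
  simp only [Finset.mem_Icc] at ha hb
  constructor
  · intro i hi
    simp only [Finset.mem_Icc] at hi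
    exact Equiv.swap_apply_of_ne_of_ne (by omega) (by omega)
  · intro i hi
    simp only [Finset.mem_Icc] at hi
    exact Equiv.swap_apply_of_ne_of_ne (by omega) (by omega)

theorem fixperm_mem_Icc {σ : Equiv.Perm ℕ} (hσ : FixPerm n k σ) {a : ℕ}
    (ha : a ∈ Finset.Icc 1 n) : σ a ∈ Finset.Icc 1 n := by
  by_contra h
  have h2 := hσ.2 (σ a) h
  have h3 : σ a = a := σ.injective h2
  rw [h3] at h; exact h ha

theorem fixperm_mem_IccV {σ : Equiv.Perm ℕ} (hσ : FixPerm n k σ) {a : ℕ}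
    (ha : a ∈ Finset.Icc (k+1) n) : σ a ∈ Finset.Icc (k+1) n := by
  simp only [Finset.mem_Icc] at ha ⊢
  have h1 : σ a ∈ Finset.Icc 1 n := fixperm_mem_Icc hσ (Finset.mem_Icc.mpr ⟨by omega, ha.2⟩)
  simp only [Finset.mem_Icc] at h1
  refine ⟨?_, h1.2⟩
  by_contra h
  have hk : σ a ∈ Finset.Icc 1 k := Finset.mem_Icc.mpr ⟨h1.1, by omega⟩
  have := hσ.1 (σ a) hk
  have : σ a = a := σ.injective this
  omega

theorem exists_fixperm : ∀ (r : ℕ) (a b : Fin r → ℕ),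
    (∀ i, a i ∈ Finset.Icc (k+1) n) → (∀ i, b i ∈ Finset.Icc (k+1) n) →
    Function.Injective a → Function.Injective b →
    ∃ σ : Equiv.Perm ℕ, FixPerm n k σ ∧ ∀ i, σ (a i) = b i
  | 0 => fun _ _ _ _ _ _ => ⟨1, fixperm_one, fun i => i.elim0⟩
  | (r+1) => by
    intro a b ha hb hia hib
    obtain ⟨σ, hσ, hs⟩ := exists_fixperm r (a ∘ Fin.castSucc) (b ∘ Fin.castSucc)
      (fun i => ha _) (fun i => hb _)
      (hia.comp (Fin.castSucc_injective r)) (hib.comp (Fin.castSucc_injective r))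
    refine ⟨Equiv.swap (σ (a (Fin.last r))) (b (Fin.last r)) * σ,
      fixperm_mul (fixperm_swap (fixperm_mem_IccV hσ (ha _)) (hb _)) hσ, ?_⟩
    intro i
    induction i using Fin.lastCases with
    | last => simp [Equiv.Perm.mul_apply, Equiv.swap_apply_left]
    | cast j =>
      have h1 : σ (a j.castSucc) = b j.castSucc := hs j
      have hne : j.castSucc ≠ Fin.last r := (Fin.castSucc_lt_last j).ne
      simp only [Equiv.Perm.mul_apply, h1]
      apply Equiv.swap_apply_of_ne_of_ne
      · intro h
        rw [← h1] at h
        exact hne (hia (σ.injective h))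
      · exact fun h => hne (hib h)

end PSDaux
namespace PSDaux

variable {k n : ℕ}

/-! ### Edge lemmas -/

theorem mem_edgesN {e : Finset ℕ} : e ∈ edgesN n ↔ e ⊆ Finset.Icc 1 n ∧ e.card = 2 :=
  Finset.mem_powersetCard

theorem pair_mem_edgesN {a b : ℕ} (ha : a ∈ Finset.Icc 1 n) (hb : b ∈ Finset.Icc 1 n)
    (hab : a ≠ b) : ({a, b} : Finset ℕ) ∈ edgesN n :=
  mem_edgesN.mpr ⟨by simp [Finset.insert_subset_iff, ha, hb], Finset.card_pair hab⟩

theorem edge_rep {e : Finset ℕ} (he : e ∈ edgesN n) :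
    ∃ a b, a ≠ b ∧ e = {a, b} ∧ a ∈ Finset.Icc 1 n ∧ b ∈ Finset.Icc 1 n := by
  obtain ⟨hsub, hcard⟩ := mem_edgesN.mp he
  obtain ⟨a, b, hab, rfl⟩ := Finset.card_eq_two.mp hcard
  exact ⟨a, b, hab, rfl, hsub (by simp), hsub (by simp)⟩

theorem image_pair (σ : Equiv.Perm ℕ) (a b : ℕ) :
    ({a, b} : Finset ℕ).image ⇑σ = {σ a, σ b} := by
  simp [Finset.image_insert]

theorem pair_eq_pair_iff {a b c d : ℕ} :
    ({a, b} : Finset ℕ) = {c, d} ↔ (a = c ∧ b = d) ∨ (a = d ∧ b = c) := by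
  constructor
  · intro h
    rw [Finset.ext_iff] at h
    have h1 : a = c ∨ a = d := by simpa using (h a).mp (by simp)
    have h2 : b = c ∨ b = d := by simpa using (h b).mp (by simp)
    have h3 : c = a ∨ c = b := by simpa using (h c).mpr (by simp)
    have h4 : d = a ∨ d = b := by simpa using (h d).mpr (by simp)
    omega
  · rintro (⟨rfl, rfl⟩ | ⟨rfl, rfl⟩)
    · rfl
    · exact Finset.pair_comm a b

theorem image_image_inv (σ : Equiv.Perm ℕ) (e : Finset ℕ) :
    (e.image ⇑σ).image ⇑σ⁻¹ = e := by
  rw [Finset.image_image]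
  have : ⇑σ⁻¹ ∘ ⇑σ = id := by funext x; simp
  rw [this, Finset.image_id]

theorem edge_image_mem {σ : Equiv.Perm ℕ} (hσ : FixPerm n k σ) {e : Finset ℕ}
    (he : e ∈ edgesN n) : e.image ⇑σ ∈ edgesN n := by
  obtain ⟨hsub, hcard⟩ := mem_edgesN.mp he
  refine mem_edgesN.mpr ⟨?_, ?_⟩
  · intro x hx
    obtain ⟨y, hy, rfl⟩ := Finset.mem_image.mp hx
    exact fixperm_mem_Icc hσ (hsub hy)
  · rw [Finset.card_image_of_injective _ σ.injective, hcard]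

theorem edge_image_mem_iff {σ : Equiv.Perm ℕ} (hσ : FixPerm n k σ) {e : Finset ℕ} :
    e.image ⇑σ ∈ edgesN n ↔ e ∈ edgesN n := by
  constructor
  · intro h
    have := edge_image_mem (k := k) (fixperm_inv hσ) h
    rwa [image_image_inv] at this
  · exact edge_image_mem hσ

/-- Johnson edges. -/
def EJ (k n : ℕ) : Finset (Finset ℕ) := (Finset.Icc (k+1) n).powersetCard 2

theorem mem_EJ {e : Finset ℕ} : e ∈ EJ k n ↔ e ⊆ Finset.Icc (k+1) n ∧ e.card = 2 :=
  Finset.mem_powersetCard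

theorem EJ_subset_edgesN {e : Finset ℕ} (he : e ∈ EJ k n) : e ∈ edgesN n := by
  obtain ⟨hsub, hcard⟩ := mem_EJ.mp he
  refine mem_edgesN.mpr ⟨fun x hx => ?_, hcard⟩
  have := hsub hx
  simp only [Finset.mem_Icc] at this ⊢
  omega

theorem pair_mem_EJ {a b : ℕ} (ha : a ∈ Finset.Icc (k+1) n) (hb : b ∈ Finset.Icc (k+1) n)
    (hab : a ≠ b) : ({a, b} : Finset ℕ) ∈ EJ k n :=
  mem_EJ.mpr ⟨by simp [Finset.insert_subset_iff, ha, hb], Finset.card_pair hab⟩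

theorem EJ_rep {e : Finset ℕ} (he : e ∈ EJ k n) :
    ∃ a b, a ≠ b ∧ e = {a, b} ∧ a ∈ Finset.Icc (k+1) n ∧ b ∈ Finset.Icc (k+1) n := by
  obtain ⟨hsub, hcard⟩ := mem_EJ.mp he
  obtain ⟨a, b, hab, rfl⟩ := Finset.card_eq_two.mp hcard
  exact ⟨a, b, hab, rfl, hsub (by simp), hsub (by simp)⟩

theorem EJ_image_mem {σ : Equiv.Perm ℕ} (hσ : FixPerm n k σ) {e : Finset ℕ}
    (he : e ∈ EJ k n) : e.image ⇑σ ∈ EJ k n := by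
  obtain ⟨hsub, hcard⟩ := mem_EJ.mp he
  refine mem_EJ.mpr ⟨?_, ?_⟩
  · intro x hx
    obtain ⟨y, hy, rfl⟩ := Finset.mem_image.mp hx
    exact fixperm_mem_IccV hσ (hsub hy)
  · rw [Finset.card_image_of_injective _ σ.injective, hcard]

theorem EJ_image_mem_iff {σ : Equiv.Perm ℕ} (hσ : FixPerm n k σ) {e : Finset ℕ} :
    e.image ⇑σ ∈ EJ k n ↔ e ∈ EJ k n := by
  constructor
  · intro h
    have := EJ_image_mem (fixperm_inv hσ) h
    rwa [image_image_inv] at this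
  · exact EJ_image_mem hσ

/-! ### Concrete transitivity -/

theorem exf1 {a a' : ℕ} (ha : a ∈ Finset.Icc (k+1) n) (ha' : a' ∈ Finset.Icc (k+1) n) :
    ∃ σ : Equiv.Perm ℕ, FixPerm n k σ ∧ σ a = a' := by
  obtain ⟨σ, hσ, h⟩ := exists_fixperm (k := k) (n := n) 1 ![a] ![a']
    (fun i => by fin_cases i <;> simp_all) (fun i => by fin_cases i <;> simp_all)
    (fun i j _ => Subsingleton.elim i j) (fun i j _ => Subsingleton.elim i j)
  exact ⟨σ, hσ, by simpa using h 0⟩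

theorem exf2 {a b a' b' : ℕ} (ha : a ∈ Finset.Icc (k+1) n) (hb : b ∈ Finset.Icc (k+1) n)
    (ha' : a' ∈ Finset.Icc (k+1) n) (hb' : b' ∈ Finset.Icc (k+1) n)
    (hab : a ≠ b) (hab' : a' ≠ b') :
    ∃ σ : Equiv.Perm ℕ, FixPerm n k σ ∧ σ a = a' ∧ σ b = b' := by
  obtain ⟨σ, hσ, h⟩ := exists_fixperm (k := k) (n := n) 2 ![a, b] ![a', b']
    (fun i => by fin_cases i <;> simp_all) (fun i => by fin_cases i <;> simp_all)
    (by intro i j hij; fin_cases i <;> fin_cases j <;> simp_all)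
    (by intro i j hij; fin_cases i <;> fin_cases j <;> simp_all)
  exact ⟨σ, hσ, by simpa using h 0, by simpa using h 1⟩

theorem exf3 {a b c a' b' c' : ℕ}
    (ha : a ∈ Finset.Icc (k+1) n) (hb : b ∈ Finset.Icc (k+1) n) (hc : c ∈ Finset.Icc (k+1) n)
    (ha' : a' ∈ Finset.Icc (k+1) n) (hb' : b' ∈ Finset.Icc (k+1) n)
    (hc' : c' ∈ Finset.Icc (k+1) n)
    (hab : a ≠ b) (hac : a ≠ c) (hbc : b ≠ c)
    (hab' : a' ≠ b') (hac' : a' ≠ c') (hbc' : b' ≠ c') :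
    ∃ σ : Equiv.Perm ℕ, FixPerm n k σ ∧ σ a = a' ∧ σ b = b' ∧ σ c = c' := by
  obtain ⟨σ, hσ, h⟩ := exists_fixperm (k := k) (n := n) 3 ![a, b, c] ![a', b', c']
    (fun i => by fin_cases i <;> simp_all) (fun i => by fin_cases i <;> simp_all)
    (by intro i j hij; fin_cases i <;> fin_cases j <;> simp_all)
    (by intro i j hij; fin_cases i <;> fin_cases j <;> simp_all)
  exact ⟨σ, hσ, by simpa using h 0, by simpa using h 1, by simpa using h 2⟩

theorem exf4 {a b c d a' b' c' d' : ℕ}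
    (ha : a ∈ Finset.Icc (k+1) n) (hb : b ∈ Finset.Icc (k+1) n) (hc : c ∈ Finset.Icc (k+1) n)
    (hd : d ∈ Finset.Icc (k+1) n)
    (ha' : a' ∈ Finset.Icc (k+1) n) (hb' : b' ∈ Finset.Icc (k+1) n)
    (hc' : c' ∈ Finset.Icc (k+1) n) (hd' : d' ∈ Finset.Icc (k+1) n)
    (hab : a ≠ b) (hac : a ≠ c) (had : a ≠ d) (hbc : b ≠ c) (hbd : b ≠ d) (hcd : c ≠ d)
    (hab' : a' ≠ b') (hac' : a' ≠ c') (had' : a' ≠ d') (hbc' : b' ≠ c') (hbd' : b' ≠ d')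
    (hcd' : c' ≠ d') :
    ∃ σ : Equiv.Perm ℕ, FixPerm n k σ ∧ σ a = a' ∧ σ b = b' ∧ σ c = c' ∧ σ d = d' := by
  obtain ⟨σ, hσ, h⟩ := exists_fixperm (k := k) (n := n) 4 ![a, b, c, d] ![a', b', c', d']
    (fun i => by fin_cases i <;> simp_all) (fun i => by fin_cases i <;> simp_all)
    (by intro i j hij; fin_cases i <;> fin_cases j <;> simp_all)
    (by intro i j hij; fin_cases i <;> fin_cases j <;> simp_all)
  exact ⟨σ, hσ, by simpa using h 0, by simpa using h 1, by simpa using h 2, by simpa using h 3⟩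

end PSDaux
namespace PSDaux

variable {k n : ℕ}

/-! ### The extended bilinear form -/

/-- `A`'s entries, extended to all pairs of finsets by zero. -/
def Bm (A : Matrix ↥(edgesN n) ↥(edgesN n) ℝ) (e f : Finset ℕ) : ℝ :=
  if he : e ∈ edgesN n then (if hf : f ∈ edgesN n then A ⟨e, he⟩ ⟨f, hf⟩ else 0) else 0

/-- The bilinear form associated to `A` on extended vectors. -/
def Qf (A : Matrix ↥(edgesN n) ↥(edgesN n) ℝ) (X Z : Finset ℕ → ℝ) : ℝ :=
  ∑ e ∈ edgesN n, ∑ f ∈ edgesN n, X e * (Bm A e f * Z f)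

variable {A : Matrix ↥(edgesN n) ↥(edgesN n) ℝ}

theorem Bm_symm (hsym : A.IsSymm) (e f : Finset ℕ) : Bm A e f = Bm A f e := by
  unfold Bm
  by_cases he : e ∈ edgesN n <;> by_cases hf : f ∈ edgesN n <;> simp [he, hf]
  exact (hsym.apply _ _).symm

theorem Qf_comm (hsym : A.IsSymm) (X Z : Finset ℕ → ℝ) : Qf A X Z = Qf A Z X := by
  unfold Qf
  rw [Finset.sum_comm]
  refine Finset.sum_congr rfl fun f _ => Finset.sum_congr rfl fun e _ => ?_
  rw [Bm_symm hsym e f]; ring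

section Inv

variable (hinv : ∀ σ : Equiv.Perm ℕ, FixPerm n k σ →
      ∀ e f : ↥(edgesN n), A (permEdge n σ e) (permEdge n σ f) = A e f)
include hinv

theorem Bm_inv {σ : Equiv.Perm ℕ} (hσ : FixPerm n k σ) (e f : Finset ℕ) :
    Bm A (e.image ⇑σ) (f.image ⇑σ) = Bm A e f := by
  by_cases he : e ∈ edgesN n
  · by_cases hf : f ∈ edgesN n
    · have he' := edge_image_mem hσ he
      have hf' := edge_image_mem hσ hf
      unfold Bm
      rw [dif_pos he, dif_pos hf, dif_pos he', dif_pos hf']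
      have := hinv σ hσ ⟨e, he⟩ ⟨f, hf⟩
      simp only [permEdge, dif_pos he', dif_pos hf'] at this
      exact this
    · have hf' : f.image ⇑σ ∉ edgesN n := fun h => hf ((edge_image_mem_iff hσ).mp h)
      unfold Bm
      by_cases he2 : e.image ⇑σ ∈ edgesN n <;> simp [hf, hf', he2]
  · have he' : e.image ⇑σ ∉ edgesN n := fun h => he ((edge_image_mem_iff hσ).mp h)
    unfold Bm
    simp [he, he']

/-- The action of a permutation on extended vectors. -/
def act (σ : Equiv.Perm ℕ) (X : Finset ℕ → ℝ) : Finset ℕ → ℝ := fun e => X (e.image ⇑σ⁻¹)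

theorem sum_edges_reindex {σ : Equiv.Perm ℕ} (hσ : FixPerm n k σ) (F : Finset ℕ → ℝ) :
    ∑ e ∈ edgesN n, F (e.image ⇑σ) = ∑ e ∈ edgesN n, F e := by
  refine Finset.sum_bij' (fun e _ => e.image ⇑σ) (fun e _ => e.image ⇑σ⁻¹) ?_ ?_ ?_ ?_ ?_
  · exact fun e he => edge_image_mem hσ he
  · exact fun e he => edge_image_mem (fixperm_inv hσ) he
  · exact fun e _ => image_image_inv σ e
  · intro e _
    show (e.image ⇑σ⁻¹).image ⇑σ = e
    rw [Finset.image_image]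
    have : ⇑σ ∘ ⇑σ⁻¹ = id := by funext x; simp
    rw [this, Finset.image_id]
  · exact fun e _ => rfl

theorem Qf_act {σ : Equiv.Perm ℕ} (hσ : FixPerm n k σ) (X Z : Finset ℕ → ℝ) :
    Qf A (act σ X) (act σ Z) = Qf A X Z := by
  unfold Qf act
  rw [← sum_edges_reindex hinv hσ
    (fun e => ∑ f ∈ edgesN n, X (e.image ⇑σ⁻¹) * (Bm A e f * Z (f.image ⇑σ⁻¹)))]
  refine Finset.sum_congr rfl fun e he => ?_
  rw [← sum_edges_reindex hinv hσ
    (fun f => X ((e.image ⇑σ).image ⇑σ⁻¹) * (Bm A (e.image ⇑σ) f * Z (f.image ⇑σ⁻¹)))]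
  refine Finset.sum_congr rfl fun f hf => ?_
  rw [image_image_inv, image_image_inv, Bm_inv hinv hσ]

end Inv

/-! ### Bilinearity -/

theorem Qf_sum_left {ι : Type*} (s : Finset ι) (c : ι → ℝ) (F : ι → Finset ℕ → ℝ)
    (Z : Finset ℕ → ℝ) :
    Qf A (fun e => ∑ i ∈ s, c i * F i e) Z = ∑ i ∈ s, c i * Qf A (F i) Z := by
  unfold Qf
  calc ∑ e ∈ edgesN n, ∑ f ∈ edgesN n, (∑ i ∈ s, c i * F i e) * (Bm A e f * Z f)
      = ∑ e ∈ edgesN n, ∑ i ∈ s, c i * ∑ f ∈ edgesN n, F i e * (Bm A e f * Z f) := by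
        refine Finset.sum_congr rfl fun e _ => ?_
        calc ∑ f ∈ edgesN n, (∑ i ∈ s, c i * F i e) * (Bm A e f * Z f)
            = ∑ f ∈ edgesN n, ∑ i ∈ s, c i * (F i e * (Bm A e f * Z f)) := by
              refine Finset.sum_congr rfl fun f _ => ?_
              rw [Finset.sum_mul]
              exact Finset.sum_congr rfl fun i _ => by ring
          _ = ∑ i ∈ s, ∑ f ∈ edgesN n, c i * (F i e * (Bm A e f * Z f)) := Finset.sum_comm
          _ = ∑ i ∈ s, c i * ∑ f ∈ edgesN n, F i e * (Bm A e f * Z f) :=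
              Finset.sum_congr rfl fun i _ => (Finset.mul_sum _ _ _).symm
    _ = ∑ i ∈ s, ∑ e ∈ edgesN n, c i * ∑ f ∈ edgesN n, F i e * (Bm A e f * Z f) :=
        Finset.sum_comm
    _ = ∑ i ∈ s, c i * ∑ e ∈ edgesN n, ∑ f ∈ edgesN n, F i e * (Bm A e f * Z f) :=
        Finset.sum_congr rfl fun i _ => (Finset.mul_sum _ _ _).symm

theorem Qf_sum_right {ι : Type*} (s : Finset ι) (c : ι → ℝ) (F : ι → Finset ℕ → ℝ)
    (X : Finset ℕ → ℝ) :
    Qf A X (fun f => ∑ i ∈ s, c i * F i f) = ∑ i ∈ s, c i * Qf A X (F i) := by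
  unfold Qf
  have : ∀ e, ∑ f ∈ edgesN n, X e * (Bm A e f * ∑ i ∈ s, c i * F i f)
      = ∑ i ∈ s, c i * ∑ f ∈ edgesN n, X e * (Bm A e f * F i f) := by
    intro e
    calc ∑ f ∈ edgesN n, X e * (Bm A e f * ∑ i ∈ s, c i * F i f)
        = ∑ f ∈ edgesN n, ∑ i ∈ s, c i * (X e * (Bm A e f * F i f)) := by
          refine Finset.sum_congr rfl fun f _ => ?_
          rw [Finset.mul_sum, Finset.mul_sum]
          exact Finset.sum_congr rfl fun i _ => by ring
      _ = ∑ i ∈ s, ∑ f ∈ edgesN n, c i * (X e * (Bm A e f * F i f)) := Finset.sum_comm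
      _ = ∑ i ∈ s, c i * ∑ f ∈ edgesN n, X e * (Bm A e f * F i f) :=
          Finset.sum_congr rfl fun i _ => (Finset.mul_sum _ _ _).symm
  calc ∑ e ∈ edgesN n, ∑ f ∈ edgesN n, X e * (Bm A e f * ∑ i ∈ s, c i * F i f)
      = ∑ e ∈ edgesN n, ∑ i ∈ s, c i * ∑ f ∈ edgesN n, X e * (Bm A e f * F i f) := by
        exact Finset.sum_congr rfl fun e _ => this e
    _ = ∑ i ∈ s, c i * ∑ e ∈ edgesN n, ∑ f ∈ edgesN n, X e * (Bm A e f * F i f) := by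
        rw [Finset.sum_comm]
        exact Finset.sum_congr rfl fun i _ => (Finset.mul_sum _ _ _).symm

theorem Qf_add_left (X Z W : Finset ℕ → ℝ) :
    Qf A (fun e => X e + Z e) W = Qf A X W + Qf A Z W := by
  unfold Qf
  rw [← Finset.sum_add_distrib]
  refine Finset.sum_congr rfl fun e _ => ?_
  rw [← Finset.sum_add_distrib]
  refine Finset.sum_congr rfl fun f _ => ?_
  ring

theorem Qf_add_right (X Z W : Finset ℕ → ℝ) :
    Qf A X (fun f => Z f + W f) = Qf A X Z + Qf A X W := by
  unfold Qf
  rw [← Finset.sum_add_distrib]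
  refine Finset.sum_congr rfl fun e _ => ?_
  rw [← Finset.sum_add_distrib]
  refine Finset.sum_congr rfl fun f _ => ?_
  ring

theorem Qf_congr {X X' Z Z' : Finset ℕ → ℝ} (hX : ∀ e, X e = X' e) (hZ : ∀ f, Z f = Z' f) :
    Qf A X Z = Qf A X' Z' := by
  unfold Qf
  exact Finset.sum_congr rfl fun e _ => Finset.sum_congr rfl fun f _ => by rw [hX, hZ]

end PSDaux
namespace PSDaux

variable {k n : ℕ}

/-! ### Component vectors -/

def dlt (a : ℕ) : ℕ → ℝ := fun x => if x = a then 1 else 0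

def indE (e₀ : Finset ℕ) : Finset ℕ → ℝ := fun e => if e = e₀ then 1 else 0

def phiM (k n j : ℕ) (y : ℕ → ℝ) : Finset ℕ → ℝ :=
  fun e => ∑ a ∈ Finset.Icc (k+1) n, (if e = {j, a} then y a else 0)

def phiJ (k n : ℕ) (y : ℕ → ℝ) : Finset ℕ → ℝ :=
  fun e => if e ∈ EJ k n then ∑ a ∈ e, y a else 0

def cM (k n j : ℕ) : Finset ℕ → ℝ :=
  fun e => ∑ a ∈ Finset.Icc (k+1) n, indE {j, a} e

def cJ (k n : ℕ) : Finset ℕ → ℝ := fun e => if e ∈ EJ k n then 1 else 0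

def Psi (k n : ℕ) (p : ↥(Finset.Icc 1 k) ⊕ Unit) (y : ℕ → ℝ) : Finset ℕ → ℝ :=
  match p with
  | .inl j => phiM k n j.1 y
  | .inr _ => phiJ k n y

/-! ### Evaluation lemmas -/

theorem phiM_delta {j a : ℕ} (ha : a ∈ Finset.Icc (k+1) n) :
    phiM k n j (dlt a) = indE {j, a} := by
  funext e
  unfold phiM dlt indE
  calc ∑ a' ∈ Finset.Icc (k+1) n, (if e = {j, a'} then (if a' = a then (1:ℝ) else 0) else 0)
      = ∑ a' ∈ Finset.Icc (k+1) n, (if a' = a then (if e = {j, a} then (1:ℝ) else 0) else 0) := by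
        refine Finset.sum_congr rfl fun a' _ => ?_
        by_cases h : a' = a
        · subst h; simp
        · simp [h]
    _ = if e = {j, a} then 1 else 0 := by
        rw [Finset.sum_ite_eq' (Finset.Icc (k+1) n) a (fun _ => if e = {j, a} then (1:ℝ) else 0)]
        simp [ha]

theorem phiJ_delta {a : ℕ} :
    phiJ k n (dlt a) = fun e => if e ∈ EJ k n then (if a ∈ e then (1:ℝ) else 0) else 0 := by
  funext e
  unfold phiJ dlt
  by_cases he : e ∈ EJ k n
  · simp only [he, if_true]
    exact Finset.sum_ite_eq' e a (fun _ => (1:ℝ))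
  · simp [he]

theorem phiM_expand (j : ℕ) (y : ℕ → ℝ) :
    phiM k n j y = fun e => ∑ a ∈ Finset.Icc (k+1) n, y a * phiM k n j (dlt a) e := by
  funext e
  have h1 : ∀ a ∈ Finset.Icc (k+1) n, y a * phiM k n j (dlt a) e
      = if e = {j, a} then y a else 0 := by
    intro a ha
    rw [phiM_delta ha]
    unfold indE
    by_cases h : e = {j, a} <;> simp [h]
  rw [Finset.sum_congr rfl h1]
  rfl

theorem phiJ_expand (y : ℕ → ℝ) :
    phiJ k n y = fun e => ∑ a ∈ Finset.Icc (k+1) n, y a * phiJ k n (dlt a) e := by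
  funext e
  have : ∀ a ∈ Finset.Icc (k+1) n, y a * phiJ k n (dlt a) e
      = if e ∈ EJ k n then (if a ∈ e then y a else 0) else 0 := by
    intro a _
    rw [phiJ_delta]
    by_cases he : e ∈ EJ k n <;> by_cases hae : a ∈ e <;> simp [he, hae]
  rw [Finset.sum_congr rfl this]
  unfold phiJ
  by_cases he : e ∈ EJ k n
  · simp only [he, if_true]
    rw [Finset.sum_ite_mem]
    congr 1
    exact (Finset.inter_eq_right.mpr (mem_EJ.mp he).1).symm
  · simp [he]

theorem Psi_expand (p : ↥(Finset.Icc 1 k) ⊕ Unit) (y : ℕ → ℝ) :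
    Psi k n p y = fun e => ∑ a ∈ Finset.Icc (k+1) n, y a * Psi k n p (dlt a) e := by
  cases p with
  | inl j => exact phiM_expand j.1 y
  | inr u => exact phiJ_expand y

/-! ### Equivariance -/

theorem image_inv_eq_iff (σ : Equiv.Perm ℕ) (e e₀ : Finset ℕ) :
    e.image ⇑σ⁻¹ = e₀ ↔ e = e₀.image ⇑σ := by
  constructor
  · rintro rfl
    have h := image_image_inv σ⁻¹ e
    rw [inv_inv] at h
    exact h.symm
  · rintro rfl
    exact image_image_inv σ e₀

theorem act_indE (σ : Equiv.Perm ℕ) (e₀ : Finset ℕ) :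
    act σ (indE e₀) = indE (e₀.image ⇑σ) := by
  funext e
  unfold act indE
  by_cases h : e.image ⇑σ⁻¹ = e₀
  · rw [if_pos h, if_pos ((image_inv_eq_iff σ e e₀).mp h)]
  · rw [if_neg h, if_neg (fun hh => h ((image_inv_eq_iff σ e e₀).mpr hh))]

theorem sum_V_reindex {σ : Equiv.Perm ℕ} (hσ : FixPerm n k σ) (F : ℕ → ℝ) :
    ∑ a ∈ Finset.Icc (k+1) n, F (σ a) = ∑ a ∈ Finset.Icc (k+1) n, F a := by
  refine Finset.sum_bij' (fun a _ => σ a) (fun a _ => σ⁻¹ a) ?_ ?_ ?_ ?_ ?_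
  · exact fun a ha => fixperm_mem_IccV hσ ha
  · exact fun a ha => fixperm_mem_IccV (fixperm_inv hσ) ha
  · intro a _; simp
  · intro a _; simp
  · exact fun a _ => rfl

theorem mem_image_inv {σ : Equiv.Perm ℕ} {a : ℕ} {e : Finset ℕ} :
    a ∈ e.image ⇑σ⁻¹ ↔ σ a ∈ e := by
  rw [Finset.mem_image]
  constructor
  · rintro ⟨x, hx, rfl⟩
    simpa using hx
  · intro h
    exact ⟨σ a, h, by simp⟩

theorem act_cM {σ : Equiv.Perm ℕ} (hσ : FixPerm n k σ) {j : ℕ} (hj : j ∈ Finset.Icc 1 k) :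
    act σ (cM k n j) = cM k n j := by
  funext e
  unfold act cM
  have h1 : ∀ a ∈ Finset.Icc (k+1) n, indE {j, a} (e.image ⇑σ⁻¹) = indE {j, σ a} e := by
    intro a _
    have := congrFun (act_indE σ {j, a}) e
    unfold act at this
    rw [this, image_pair, hσ.1 j hj]
  rw [Finset.sum_congr rfl h1]
  exact sum_V_reindex hσ (fun a => indE {j, a} e)

theorem act_cJ {σ : Equiv.Perm ℕ} (hσ : FixPerm n k σ) : act σ (cJ k n) = cJ k n := by
  funext e
  unfold act cJ
  by_cases h : e ∈ EJ k n
  · rw [if_pos ((EJ_image_mem_iff (fixperm_inv hσ)).mpr h), if_pos h]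
  · rw [if_neg (fun hh => h ((EJ_image_mem_iff (fixperm_inv hσ)).mp hh)), if_neg h]

theorem act_indEK {σ : Equiv.Perm ℕ} (hσ : FixPerm n k σ) {e₀ : Finset ℕ}
    (he₀ : e₀ ⊆ Finset.Icc 1 k) : act σ (indE e₀) = indE e₀ := by
  rw [act_indE]
  have h2 : e₀.image ⇑σ = e₀ := by
    calc e₀.image ⇑σ = e₀.image id := Finset.image_congr (fun x hx => hσ.1 x (he₀ hx))
      _ = e₀ := Finset.image_id
  rw [h2]

theorem act_phiM_delta {σ : Equiv.Perm ℕ} (hσ : FixPerm n k σ) {j a : ℕ}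
    (hj : j ∈ Finset.Icc 1 k) (ha : a ∈ Finset.Icc (k+1) n) :
    act σ (phiM k n j (dlt a)) = phiM k n j (dlt (σ a)) := by
  rw [phiM_delta ha, phiM_delta (fixperm_mem_IccV hσ ha), act_indE, image_pair, hσ.1 j hj]

theorem act_phiJ_delta {σ : Equiv.Perm ℕ} (hσ : FixPerm n k σ) {a : ℕ}
    (ha : a ∈ Finset.Icc (k+1) n) :
    act σ (phiJ k n (dlt a)) = phiJ k n (dlt (σ a)) := by
  funext e
  unfold act
  simp only [phiJ_delta]
  have hEJ : e.image ⇑σ⁻¹ ∈ EJ k n ↔ e ∈ EJ k n := EJ_image_mem_iff (fixperm_inv hσ)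
  by_cases h : e ∈ EJ k n
  · rw [if_pos (hEJ.mpr h), if_pos h]
    by_cases hm : σ a ∈ e
    · rw [if_pos (mem_image_inv.mpr hm), if_pos hm]
    · rw [if_neg (fun hh => hm (mem_image_inv.mp hh)), if_neg hm]
  · rw [if_neg (fun hh => h (hEJ.mp hh)), if_neg h]

theorem act_Psi_delta {σ : Equiv.Perm ℕ} (hσ : FixPerm n k σ)
    (p : ↥(Finset.Icc 1 k) ⊕ Unit) {a : ℕ} (ha : a ∈ Finset.Icc (k+1) n) :
    act σ (Psi k n p (dlt a)) = Psi k n p (dlt (σ a)) := by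
  cases p with
  | inl j => exact act_phiM_delta hσ j.2 ha
  | inr u => exact act_phiJ_delta hσ ha

end PSDaux
namespace PSDaux

variable {k n : ℕ} {A : Matrix ↥(edgesN n) ↥(edgesN n) ℝ}

/-! ### Degrees and totals on the Johnson part -/

def degW (k n : ℕ) (W : Finset ℕ → ℝ) (a : ℕ) : ℝ :=
  ∑ f ∈ EJ k n, (if a ∈ f then W f else 0)

theorem double_count (W : Finset ℕ → ℝ) :
    ∑ a ∈ Finset.Icc (k+1) n, degW k n W a = 2 * ∑ f ∈ EJ k n, W f := by
  unfold degW
  rw [Finset.sum_comm, Finset.mul_sum]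
  refine Finset.sum_congr rfl fun f hf => ?_
  rw [Finset.sum_ite_mem, Finset.inter_eq_right.mpr (mem_EJ.mp hf).1, Finset.sum_const,
    (mem_EJ.mp hf).2]
  push_cast
  ring

theorem total_zero {W : Finset ℕ → ℝ}
    (hdeg : ∀ a ∈ Finset.Icc (k+1) n, degW k n W a = 0) : ∑ f ∈ EJ k n, W f = 0 := by
  have h := double_count (k := k) (n := n) W
  rw [Finset.sum_congr rfl hdeg, Finset.sum_const, smul_zero] at h
  linarith

theorem sum_W_phiJ (y₀ : ℕ → ℝ) (W' : Finset ℕ → ℝ) :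
    ∑ f ∈ EJ k n, W' f * (∑ a ∈ f, y₀ a) = ∑ a ∈ Finset.Icc (k+1) n, y₀ a * degW k n W' a := by
  have h1 : ∀ f ∈ EJ k n, W' f * (∑ a ∈ f, y₀ a)
      = ∑ a ∈ Finset.Icc (k+1) n, (if a ∈ f then W' f * y₀ a else 0) := by
    intro f hf
    rw [Finset.sum_ite_mem, Finset.inter_eq_right.mpr (mem_EJ.mp hf).1, Finset.mul_sum]
  rw [Finset.sum_congr rfl h1, Finset.sum_comm]
  refine Finset.sum_congr rfl fun a _ => ?_
  unfold degW
  rw [Finset.mul_sum]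
  refine Finset.sum_congr rfl fun f _ => ?_
  by_cases h : a ∈ f <;> simp [h] <;> ring

/-! ### Expansion of a Johnson-supported vector into indicators -/

theorem W3_expand {W : Finset ℕ → ℝ} (hsupp : ∀ e, e ∉ EJ k n → W e = 0) (f : Finset ℕ) :
    W f = ∑ f₀ ∈ EJ k n, W f₀ * indE f₀ f := by
  have h1 : ∀ f₀ ∈ EJ k n, W f₀ * indE f₀ f = if f = f₀ then W f₀ else 0 := by
    intro f₀ _
    unfold indE
    by_cases h : f = f₀ <;> simp [h]
  rw [Finset.sum_congr rfl h1, Finset.sum_ite_eq]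
  by_cases h : f ∈ EJ k n
  · simp [h]
  · simp [h, hsupp f h]

/-! ### Membership helpers -/

theorem memV1 (hn : k + 4 ≤ n) : k + 1 ∈ Finset.Icc (k+1) n := Finset.mem_Icc.mpr ⟨by omega, by omega⟩
theorem memV2 (hn : k + 4 ≤ n) : k + 2 ∈ Finset.Icc (k+1) n := Finset.mem_Icc.mpr ⟨by omega, by omega⟩
theorem memV3 (hn : k + 4 ≤ n) : k + 3 ∈ Finset.Icc (k+1) n := Finset.mem_Icc.mpr ⟨by omega, by omega⟩
theorem memV4 (hn : k + 4 ≤ n) : k + 4 ∈ Finset.Icc (k+1) n := Finset.mem_Icc.mpr ⟨by omega, by omega⟩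

section WithInv

variable (hinv : ∀ σ : Equiv.Perm ℕ, FixPerm n k σ →
      ∀ e f : ↥(edgesN n), A (permEdge n σ e) (permEdge n σ f) = A e f)
include hinv

/-! ### Cross term: invariant vector vs `Psi` -/

theorem cross_u_Psi (hn : k + 4 ≤ n) {u : Finset ℕ → ℝ}
    (hu : ∀ σ : Equiv.Perm ℕ, FixPerm n k σ → act σ u = u)
    (p : ↥(Finset.Icc 1 k) ⊕ Unit) (y : ℕ → ℝ)
    (hy : ∑ a ∈ Finset.Icc (k+1) n, y a = 0) :
    Qf A u (Psi k n p y) = 0 := by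
  have hconst : ∀ a ∈ Finset.Icc (k+1) n,
      Qf A u (Psi k n p (dlt a)) = Qf A u (Psi k n p (dlt (k+1))) := by
    intro a ha
    obtain ⟨σ, hσ, hσa⟩ := exf1 ha (memV1 hn)
    calc Qf A u (Psi k n p (dlt a))
        = Qf A (act σ u) (act σ (Psi k n p (dlt a))) := (Qf_act hinv hσ _ _).symm
      _ = Qf A u (Psi k n p (dlt (σ a))) := by rw [hu σ hσ, act_Psi_delta hσ p ha]
      _ = Qf A u (Psi k n p (dlt (k+1))) := by rw [hσa]
  rw [Psi_expand p y, Qf_sum_right]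
  calc ∑ a ∈ Finset.Icc (k+1) n, y a * Qf A u (Psi k n p (dlt a))
      = ∑ a ∈ Finset.Icc (k+1) n, y a * Qf A u (Psi k n p (dlt (k+1))) :=
        Finset.sum_congr rfl fun a ha => by rw [hconst a ha]
    _ = (∑ a ∈ Finset.Icc (k+1) n, y a) * Qf A u (Psi k n p (dlt (k+1))) :=
        (Finset.sum_mul _ _ _).symm
    _ = 0 := by rw [hy, zero_mul]

/-! ### The W₂ block -/

theorem Psi_pattern (hn : k + 4 ≤ n) (p q : ↥(Finset.Icc 1 k) ⊕ Unit)
    {a b : ℕ} (ha : a ∈ Finset.Icc (k+1) n) (hb : b ∈ Finset.Icc (k+1) n) :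
    Qf A (Psi k n p (dlt a)) (Psi k n q (dlt b))
      = if a = b then Qf A (Psi k n p (dlt (k+1))) (Psi k n q (dlt (k+1)))
        else Qf A (Psi k n p (dlt (k+1))) (Psi k n q (dlt (k+2))) := by
  by_cases hab : a = b
  · subst hab
    rw [if_pos rfl]
    obtain ⟨σ, hσ, hσa⟩ := exf1 ha (memV1 hn)
    calc Qf A (Psi k n p (dlt a)) (Psi k n q (dlt a))
        = Qf A (act σ (Psi k n p (dlt a))) (act σ (Psi k n q (dlt a))) :=
          (Qf_act hinv hσ _ _).symm
      _ = _ := by rw [act_Psi_delta hσ p ha, act_Psi_delta hσ q ha, hσa]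
  · rw [if_neg hab]
    obtain ⟨σ, hσ, hσa, hσb⟩ := exf2 ha hb (memV1 hn) (memV2 hn) hab (by omega)
    calc Qf A (Psi k n p (dlt a)) (Psi k n q (dlt b))
        = Qf A (act σ (Psi k n p (dlt a))) (act σ (Psi k n q (dlt b))) :=
          (Qf_act hinv hσ _ _).symm
      _ = _ := by rw [act_Psi_delta hσ p ha, act_Psi_delta hσ q hb, hσa, hσb]

theorem Qf_Psi_Psi (hn : k + 4 ≤ n) (p q : ↥(Finset.Icc 1 k) ⊕ Unit) (y z : ℕ → ℝ)
    (hz : ∑ a ∈ Finset.Icc (k+1) n, z a = 0) :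
    Qf A (Psi k n p y) (Psi k n q z)
      = (Qf A (Psi k n p (dlt (k+1))) (Psi k n q (dlt (k+1)))
          - Qf A (Psi k n p (dlt (k+1))) (Psi k n q (dlt (k+2))))
        * ∑ a ∈ Finset.Icc (k+1) n, y a * z a := by
  set D := Qf A (Psi k n p (dlt (k+1))) (Psi k n q (dlt (k+1))) with hD
  set O := Qf A (Psi k n p (dlt (k+1))) (Psi k n q (dlt (k+2))) with hO
  rw [Psi_expand p y, Qf_sum_left]
  have hinner : ∀ a ∈ Finset.Icc (k+1) n,
      Qf A (Psi k n p (dlt a)) (Psi k n q z) = (D - O) * z a + O * 0 := by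
    intro a ha
    rw [Psi_expand q z, Qf_sum_right]
    have h2 : ∀ b ∈ Finset.Icc (k+1) n,
        z b * Qf A (Psi k n p (dlt a)) (Psi k n q (dlt b))
          = O * z b + (if b = a then (D - O) * z b else 0) := by
      intro b hb
      rw [Psi_pattern hinv hn p q ha hb]
      by_cases h : a = b
      · subst h; simp; ring
      · rw [if_neg h, if_neg (fun hh => h hh.symm)]; ring
    rw [Finset.sum_congr rfl h2, Finset.sum_add_distrib, ← Finset.mul_sum, hz,
      Finset.sum_ite_eq' (Finset.Icc (k+1) n) a (fun b => (D - O) * z b), if_pos ha]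
    ring
  rw [Finset.sum_congr rfl (fun a ha => by rw [hinner a ha])]
  rw [Finset.mul_sum]
  refine Finset.sum_congr rfl fun a _ => by ring

/-! ### The W₃ block : pointwise pattern -/

theorem Bm_pattern (hn : k + 4 ≤ n) {e f : Finset ℕ} (he : e ∈ EJ k n) (hf : f ∈ EJ k n)
    {a b : ℕ} (hab : a ≠ b) (hea : e = {a, b})
    (haV : a ∈ Finset.Icc (k+1) n) (hbV : b ∈ Finset.Icc (k+1) n) :
    Bm A e f = Bm A {k+1, k+2} {k+1, k+2} * (if f = e then 1 else 0)
      + Bm A {k+1, k+2} {k+1, k+3} * ((if a ∈ f then 1 else 0) + (if b ∈ f then 1 else 0)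
          - 2 * (if f = e then 1 else 0))
      + Bm A {k+1, k+2} {k+3, k+4} * (1 - (if a ∈ f then 1 else 0) - (if b ∈ f then 1 else 0)
          + (if f = e then 1 else 0)) := by
  obtain ⟨c, d, hcd, hfe, hcV, hdV⟩ := EJ_rep hf
  by_cases hac : a ∈ f <;> by_cases hbc : b ∈ f
  · -- both endpoints of e in f : f = e
    have hfeq : f = e := by
      subst hea
      refine (Finset.eq_of_subset_of_card_le ?_ ?_).symm
      · intro x hx
        simp only [Finset.mem_insert, Finset.mem_singleton] at hx
        rcases hx with rfl | rfl
        · exact hac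
        · exact hbc
      · rw [(mem_EJ.mp hf).2, (mem_EJ.mp he).2]
    obtain ⟨σ, hσ, hσ1, hσ2⟩ := exf2 haV hbV (memV1 hn) (memV2 hn) hab (by omega)
    have hBm : Bm A e e = Bm A {k+1, k+2} {k+1, k+2} := by
      have := Bm_inv hinv hσ e e
      rw [hea, image_pair, hσ1, hσ2] at this
      rw [hea, ← this]
    rw [hfeq, hBm, if_pos rfl, if_pos (hea ▸ Finset.mem_insert_self a {b}),
      if_pos (hea ▸ Finset.mem_insert_of_mem (Finset.mem_singleton_self b))]
    ring
  · -- a ∈ f, b ∉ f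
    obtain ⟨c', hc'V, hc'a, hc'b, hfc⟩ : ∃ c', c' ∈ Finset.Icc (k+1) n ∧ c' ≠ a ∧ c' ≠ b ∧
        f = {a, c'} := by
      subst hfe
      rcases Finset.mem_insert.mp hac with rfl | h
      · exact ⟨d, hdV, fun h => hcd h.symm, fun h => hbc (h ▸ Finset.mem_insert_of_mem
          (Finset.mem_singleton_self d)), rfl⟩
      · rw [Finset.mem_singleton] at h
        subst h
        exact ⟨c, hcV, fun h => hcd h, fun h => hbc (h ▸ Finset.mem_insert_self c {a}),
          Finset.pair_comm c a⟩
    have hfne : f ≠ e := by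
      intro h
      rw [h, hea] at hbc
      exact hbc (Finset.mem_insert_of_mem (Finset.mem_singleton_self b))
    obtain ⟨σ, hσ, hσ1, hσ2, hσ3⟩ := exf3 haV hbV hc'V (memV1 hn) (memV2 hn) (memV3 hn)
      hab (fun h => hc'a h.symm) (fun h => hc'b h.symm) (by omega) (by omega) (by omega)
    have hBm : Bm A e f = Bm A {k+1, k+2} {k+1, k+3} := by
      have := Bm_inv hinv hσ e f
      rw [hea, hfc, image_pair, image_pair, hσ1, hσ2, hσ3] at this
      rw [hea, hfc, ← this]
    rw [hBm, if_neg hfne, if_pos hac, if_neg hbc]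
    ring
  · -- b ∈ f, a ∉ f
    obtain ⟨c', hc'V, hc'a, hc'b, hfc⟩ : ∃ c', c' ∈ Finset.Icc (k+1) n ∧ c' ≠ a ∧ c' ≠ b ∧
        f = {b, c'} := by
      subst hfe
      rcases Finset.mem_insert.mp hbc with rfl | h
      · exact ⟨d, hdV, fun h => hac (h ▸ Finset.mem_insert_of_mem
          (Finset.mem_singleton_self d)), fun h => hcd h.symm, rfl⟩
      · rw [Finset.mem_singleton] at h
        subst h
        exact ⟨c, hcV, fun h => hac (h ▸ Finset.mem_insert_self c {b}), fun h => hcd h,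
          Finset.pair_comm c b⟩
    have hfne : f ≠ e := by
      intro h
      rw [h, hea] at hac
      exact hac (Finset.mem_insert_self a {b})
    obtain ⟨σ, hσ, hσ1, hσ2, hσ3⟩ := exf3 haV hbV hc'V (memV2 hn) (memV1 hn) (memV3 hn)
      hab (fun h => hc'a h.symm) (fun h => hc'b h.symm) (by omega) (by omega) (by omega)
    have hBm : Bm A e f = Bm A {k+1, k+2} {k+1, k+3} := by
      have := Bm_inv hinv hσ e f
      rw [hea, hfc, image_pair, image_pair, hσ1, hσ2, hσ3] at this
      rw [hea, hfc, ← this]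
      rw [Finset.pair_comm (k+2) (k+1)]
    rw [hBm, if_neg hfne, if_neg hac, if_pos hbc]
    ring
  · -- disjoint
    have hfne : f ≠ e := by
      intro h
      rw [h, hea] at hac
      exact hac (Finset.mem_insert_self a {b})
    have hca : c ≠ a := fun h => hac (h ▸ hfe ▸ Finset.mem_insert_self c {d})
    have hcb : c ≠ b := fun h => hbc (h ▸ hfe ▸ Finset.mem_insert_self c {d})
    have hda : d ≠ a := fun h => hac (h ▸ hfe ▸ Finset.mem_insert_of_mem
      (Finset.mem_singleton_self d))
    have hdb : d ≠ b := fun h => hbc (h ▸ hfe ▸ Finset.mem_insert_of_mem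
      (Finset.mem_singleton_self d))
    obtain ⟨σ, hσ, hσ1, hσ2, hσ3, hσ4⟩ := exf4 haV hbV hcV hdV
      (memV1 hn) (memV2 hn) (memV3 hn) (memV4 hn)
      hab (fun h => hca h.symm) (fun h => hda h.symm) (fun h => hcb h.symm)
      (fun h => hdb h.symm) hcd
      (by omega) (by omega) (by omega) (by omega) (by omega) (by omega)
    have hBm : Bm A e f = Bm A {k+1, k+2} {k+3, k+4} := by
      have := Bm_inv hinv hσ e f
      rw [hea, hfe, image_pair, image_pair, hσ1, hσ2, hσ3, hσ4] at this
      rw [hea, hfe, ← this]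
    rw [hBm, if_neg hfne, if_neg hac, if_neg hbc]
    ring

end WithInv

end PSDaux
namespace PSDaux

variable {k n : ℕ} {A : Matrix ↥(edgesN n) ↥(edgesN n) ℝ}

section WithInv2

variable (hinv : ∀ σ : Equiv.Perm ℕ, FixPerm n k σ →
      ∀ e f : ↥(edgesN n), A (permEdge n σ e) (permEdge n σ f) = A e f)
include hinv

/-! ### The W₃ quadratic form -/

theorem Qf_W3 (hn : k + 4 ≤ n) {W : Finset ℕ → ℝ}
    (hsupp : ∀ e, e ∉ EJ k n → W e = 0)
    (hdeg : ∀ a ∈ Finset.Icc (k+1) n, degW k n W a = 0) :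
    Qf A W W = (Bm A {k+1, k+2} {k+1, k+2} - 2 * Bm A {k+1, k+2} {k+1, k+3}
        + Bm A {k+1, k+2} {k+3, k+4}) * ∑ e ∈ EJ k n, W e ^ 2 := by
  have hT : ∑ f ∈ EJ k n, W f = 0 := total_zero hdeg
  set α := Bm A {k+1, k+2} {k+1, k+2} with hα
  set β := Bm A {k+1, k+2} {k+1, k+3} with hβ
  set γ := Bm A {k+1, k+2} {k+3, k+4} with hγ
  have h1 : Qf A W W = ∑ e ∈ EJ k n, ∑ f ∈ EJ k n, W e * (Bm A e f * W f) := by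
    unfold Qf
    rw [← Finset.sum_subset (fun e (he : e ∈ EJ k n) => EJ_subset_edgesN he)
        (fun e _ he => by simp [hsupp e he])]
    refine Finset.sum_congr rfl fun e _ => ?_
    rw [← Finset.sum_subset (fun f (hf : f ∈ EJ k n) => EJ_subset_edgesN hf)
        (fun f _ hf => by simp [hsupp f hf])]
  have Sa : ∀ x, ∑ f ∈ EJ k n, (if x ∈ f then (1:ℝ) else 0) * W f = degW k n W x := by
    intro x
    unfold degW
    refine Finset.sum_congr rfl fun f _ => ?_
    by_cases h : x ∈ f <;> simp [h]
  have key : ∀ e ∈ EJ k n, ∑ f ∈ EJ k n, Bm A e f * W f = (α - 2*β + γ) * W e := by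
    intro e he
    obtain ⟨a, b, hab, hea, haV, hbV⟩ := EJ_rep he
    have Se : ∑ f ∈ EJ k n, (if f = e then (1:ℝ) else 0) * W f = W e := by
      have h2 : ∀ f ∈ EJ k n, (if f = e then (1:ℝ) else 0) * W f = if f = e then W f else 0 :=
        fun f _ => by by_cases h : f = e <;> simp [h]
      rw [Finset.sum_congr rfl h2, Finset.sum_ite_eq' (EJ k n) e W, if_pos he]
    calc ∑ f ∈ EJ k n, Bm A e f * W f
        = ∑ f ∈ EJ k n, ((α - 2*β + γ) * ((if f = e then (1:ℝ) else 0) * W f)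
            + (β * ((if a ∈ f then (1:ℝ) else 0) * W f)
            + (β * ((if b ∈ f then (1:ℝ) else 0) * W f)
            + (γ * W f
            + (-γ * ((if a ∈ f then (1:ℝ) else 0) * W f)
            + -γ * ((if b ∈ f then (1:ℝ) else 0) * W f)))))) := by
          refine Finset.sum_congr rfl fun f hf => ?_
          rw [Bm_pattern hinv hn he hf hab hea haV hbV]
          ring
      _ = (α - 2*β + γ) * (∑ f ∈ EJ k n, (if f = e then (1:ℝ) else 0) * W f)
            + (β * (∑ f ∈ EJ k n, (if a ∈ f then (1:ℝ) else 0) * W f)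
            + (β * (∑ f ∈ EJ k n, (if b ∈ f then (1:ℝ) else 0) * W f)
            + (γ * (∑ f ∈ EJ k n, W f)
            + (-γ * (∑ f ∈ EJ k n, (if a ∈ f then (1:ℝ) else 0) * W f)
            + -γ * (∑ f ∈ EJ k n, (if b ∈ f then (1:ℝ) else 0) * W f))))) := by
          rw [Finset.sum_add_distrib, Finset.sum_add_distrib, Finset.sum_add_distrib,
            Finset.sum_add_distrib, Finset.sum_add_distrib, ← Finset.mul_sum, ← Finset.mul_sum,
            ← Finset.mul_sum, ← Finset.mul_sum, ← Finset.mul_sum, ← Finset.mul_sum]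
      _ = (α - 2*β + γ) * W e := by
          rw [Se, Sa, Sa, hdeg a haV, hdeg b hbV, hT]
          ring
  rw [h1]
  calc ∑ e ∈ EJ k n, ∑ f ∈ EJ k n, W e * (Bm A e f * W f)
      = ∑ e ∈ EJ k n, (α - 2*β + γ) * W e ^ 2 := by
        refine Finset.sum_congr rfl fun e he => ?_
        rw [← Finset.mul_sum, key e he]
        ring
    _ = (α - 2*β + γ) * ∑ e ∈ EJ k n, W e ^ 2 := by rw [Finset.mul_sum]

/-! ### Cross term: invariant vector vs `W₃` -/

theorem cross_u_W3 (hn : k + 4 ≤ n) {u W : Finset ℕ → ℝ}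
    (hu : ∀ σ : Equiv.Perm ℕ, FixPerm n k σ → act σ u = u)
    (hsupp : ∀ e, e ∉ EJ k n → W e = 0)
    (hdeg : ∀ a ∈ Finset.Icc (k+1) n, degW k n W a = 0) :
    Qf A u W = 0 := by
  have hT : ∑ f ∈ EJ k n, W f = 0 := total_zero hdeg
  have hexp : Qf A u W = ∑ f₀ ∈ EJ k n, W f₀ * Qf A u (indE f₀) := by
    rw [Qf_congr (fun e => rfl) (W3_expand hsupp), Qf_sum_right]
  have hconst : ∀ f₀ ∈ EJ k n, Qf A u (indE f₀) = Qf A u (indE {k+1, k+2}) := by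
    intro f₀ hf₀
    obtain ⟨a, b, hab, rfl, haV, hbV⟩ := EJ_rep hf₀
    obtain ⟨σ, hσ, h1, h2⟩ := exf2 haV hbV (memV1 hn) (memV2 hn) hab (by omega)
    calc Qf A u (indE {a, b})
        = Qf A (act σ u) (act σ (indE {a, b})) := (Qf_act hinv hσ _ _).symm
      _ = Qf A u (indE {k+1, k+2}) := by rw [hu σ hσ, act_indE, image_pair, h1, h2]
  rw [hexp, Finset.sum_congr rfl (fun f₀ h => by rw [hconst f₀ h]), ← Finset.sum_mul, hT,
    zero_mul]

/-! ### Cross term: `Psi` vs `W₃` -/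

theorem cross_Psi_W3 (hn : k + 4 ≤ n) (p : ↥(Finset.Icc 1 k) ⊕ Unit) (y : ℕ → ℝ)
    {W : Finset ℕ → ℝ} (hsupp : ∀ e, e ∉ EJ k n → W e = 0)
    (hdeg : ∀ a ∈ Finset.Icc (k+1) n, degW k n W a = 0) :
    Qf A (Psi k n p y) W = 0 := by
  have hT : ∑ f ∈ EJ k n, W f = 0 := total_zero hdeg
  set β2 := Qf A (Psi k n p (dlt (k+1))) (indE {k+1, k+2}) with hβ2
  set γ2 := Qf A (Psi k n p (dlt (k+1))) (indE {k+2, k+3}) with hγ2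
  have hN : ∀ a ∈ Finset.Icc (k+1) n, ∀ f₀ ∈ EJ k n,
      Qf A (Psi k n p (dlt a)) (indE f₀) = if a ∈ f₀ then β2 else γ2 := by
    intro a ha f₀ hf₀
    obtain ⟨b, c, hbc, rfl, hbV, hcV⟩ := EJ_rep hf₀
    by_cases hmem : a ∈ ({b, c} : Finset ℕ)
    · rw [if_pos hmem]
      obtain ⟨c', hc'V, hac', hf₀'⟩ : ∃ c', c' ∈ Finset.Icc (k+1) n ∧ a ≠ c' ∧
          ({b, c} : Finset ℕ) = {a, c'} := by
        rcases Finset.mem_insert.mp hmem with rfl | h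
        · exact ⟨c, hcV, hbc, rfl⟩
        · rw [Finset.mem_singleton] at h
          subst h
          exact ⟨b, hbV, fun h => hbc h.symm, Finset.pair_comm b a⟩
      obtain ⟨σ, hσ, h1, h2⟩ := exf2 ha hc'V (memV1 hn) (memV2 hn) hac' (by omega)
      calc Qf A (Psi k n p (dlt a)) (indE {b, c})
          = Qf A (act σ (Psi k n p (dlt a))) (act σ (indE {b, c})) := (Qf_act hinv hσ _ _).symm
        _ = β2 := by
            rw [act_Psi_delta hσ p ha, act_indE, hf₀', image_pair, h1, h2, hβ2]
    · rw [if_neg hmem]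
      have hax : a ≠ b ∧ a ≠ c := by
        constructor <;> intro h <;> subst h <;> simp at hmem
      obtain ⟨σ, hσ, h1, h2, h3⟩ := exf3 ha hbV hcV (memV1 hn) (memV2 hn) (memV3 hn)
        hax.1 hax.2 hbc (by omega) (by omega) (by omega)
      calc Qf A (Psi k n p (dlt a)) (indE {b, c})
          = Qf A (act σ (Psi k n p (dlt a))) (act σ (indE {b, c})) := (Qf_act hinv hσ _ _).symm
        _ = γ2 := by
            rw [act_Psi_delta hσ p ha, act_indE, image_pair, h1, h2, h3, hγ2]
  have hexp : Qf A (Psi k n p y) W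
      = ∑ f₀ ∈ EJ k n, W f₀ * Qf A (Psi k n p y) (indE f₀) := by
    rw [Qf_congr (fun e => rfl) (W3_expand hsupp), Qf_sum_right]
  have hval : ∀ f₀ ∈ EJ k n, Qf A (Psi k n p y) (indE f₀)
      = γ2 * (∑ a ∈ Finset.Icc (k+1) n, y a) + (β2 - γ2) * ∑ a ∈ f₀, y a := by
    intro f₀ hf₀
    rw [Psi_expand p y, Qf_sum_left]
    have h4 : ∀ a ∈ Finset.Icc (k+1) n, y a * Qf A (Psi k n p (dlt a)) (indE f₀)
        = γ2 * y a + (if a ∈ f₀ then (β2 - γ2) * y a else 0) := by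
      intro a ha
      rw [hN a ha f₀ hf₀]
      by_cases h : a ∈ f₀ <;> simp [h] <;> ring
    rw [Finset.sum_congr rfl h4, Finset.sum_add_distrib, ← Finset.mul_sum,
      Finset.sum_ite_mem, Finset.inter_eq_right.mpr (mem_EJ.mp hf₀).1, ← Finset.mul_sum]
  have hT2 : ∑ f₀ ∈ EJ k n, W f₀ * ∑ a ∈ f₀, y a = 0 := by
    rw [sum_W_phiJ y W,
      Finset.sum_congr rfl (fun a ha => by rw [hdeg a ha, mul_zero] : ∀ a ∈ Finset.Icc (k+1) n,
        y a * degW k n W a = 0), Finset.sum_const, smul_zero]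
  rw [hexp]
  calc ∑ f₀ ∈ EJ k n, W f₀ * Qf A (Psi k n p y) (indE f₀)
      = ∑ f₀ ∈ EJ k n, (γ2 * (∑ a ∈ Finset.Icc (k+1) n, y a) * W f₀
          + (β2 - γ2) * (W f₀ * ∑ a ∈ f₀, y a)) := by
        refine Finset.sum_congr rfl fun f₀ h => ?_
        rw [hval f₀ h]
        ring
    _ = γ2 * (∑ a ∈ Finset.Icc (k+1) n, y a) * (∑ f₀ ∈ EJ k n, W f₀)
        + (β2 - γ2) * ∑ f₀ ∈ EJ k n, W f₀ * ∑ a ∈ f₀, y a := by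
        rw [Finset.sum_add_distrib, ← Finset.mul_sum, ← Finset.mul_sum]
    _ = 0 := by rw [hT, hT2]; ring

end WithInv2

end PSDaux
namespace PSDaux

variable {k n : ℕ} {A : Matrix ↥(edgesN n) ↥(edgesN n) ℝ}

/-! ### Columns of the `U` matrices as extended vectors -/

def colF {ι : Type*} (U : Matrix ↥(edgesN n) ι ℝ) (p : ι) : Finset ℕ → ℝ :=
  fun e => if h : e ∈ edgesN n then U ⟨e, h⟩ p else 0

theorem block_eq {ι : Type*} [Fintype ι] (U : Matrix ↥(edgesN n) ι ℝ) (p q : ι) :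
    (Uᵀ * A * U) p q = Qf A (colF U p) (colF U q) := by
  have h1 : (Uᵀ * A * U) p q = ∑ g : ↥(edgesN n), ∑ h : ↥(edgesN n), U g p * (A g h * U h q) := by
    rw [Matrix.mul_apply]
    have h2 : ∀ h, (Uᵀ * A) p h * U h q = ∑ g : ↥(edgesN n), U g p * (A g h * U h q) := by
      intro h
      rw [Matrix.mul_apply, Finset.sum_mul]
      exact Finset.sum_congr rfl fun g _ => by rw [Matrix.transpose_apply]; ring
    rw [Finset.sum_congr rfl fun h _ => h2 h]
    exact Finset.sum_comm
  rw [h1]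
  unfold Qf
  rw [← Finset.sum_coe_sort (edgesN n)
      (fun e => ∑ f ∈ edgesN n, colF U p e * (Bm A e f * colF U q f))]
  refine Finset.sum_congr rfl fun g _ => ?_
  rw [← Finset.sum_coe_sort (edgesN n) (fun f => colF U p g.1 * (Bm A g.1 f * colF U q f))]
  refine Finset.sum_congr rfl fun h _ => ?_
  show U g p * (A g h * U h q) = colF U p g.1 * (Bm A g.1 h.1 * colF U q h.1)
  unfold colF Bm
  rw [dif_pos g.2, dif_pos h.2, dif_pos g.2, dif_pos h.2]

theorem edgesK_sub (hkn : k ≤ n) {e : Finset ℕ} (he : e ∈ edgesN k) : e ∈ edgesN n := by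
  obtain ⟨h1, h2⟩ := mem_edgesN.mp he
  exact mem_edgesN.mpr ⟨h1.trans (Finset.Icc_subset_Icc le_rfl hkn), h2⟩

theorem colF_U1_inl (hn : k + 4 ≤ n) (e₀ : ↥(edgesN k)) :
    colF (U1 k n) (Sum.inl e₀) = indE e₀.1 := by
  funext e
  unfold colF
  by_cases h : e ∈ edgesN n
  · rw [dif_pos h]
    show vN n e₀.1 ⟨e, h⟩ = indE e₀.1 e
    rfl
  · rw [dif_neg h]
    unfold indE
    have hne : e ≠ e₀.1 := fun heq => h (by rw [heq]; exact edgesK_sub (by omega) e₀.2)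
    rw [if_neg hne]

theorem colF_U1_inlr (hn : k + 4 ≤ n) (j : ↥(Finset.Icc 1 k)) :
    colF (U1 k n) (Sum.inr (Sum.inl j)) = cM k n j.1 := by
  funext e
  unfold colF
  by_cases h : e ∈ edgesN n
  · rw [dif_pos h]
    show ∑ i ∈ Finset.Icc (k+1) n, vN n {j.1, i} ⟨e, h⟩ = cM k n j.1 e
    rfl
  · rw [dif_neg h]
    unfold cM
    symm
    refine Finset.sum_eq_zero fun a ha => ?_
    unfold indE
    have hj := Finset.mem_Icc.mp j.2
    have haV := Finset.mem_Icc.mp ha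
    have hne : e ≠ ({j.1, a} : Finset ℕ) := fun heq => h (by
      rw [heq]
      exact pair_mem_edgesN (Finset.mem_Icc.mpr ⟨hj.1, by omega⟩)
        (Finset.mem_Icc.mpr ⟨by omega, haV.2⟩) (by omega))
    exact if_neg hne

theorem colF_U1_inrr (hn : k + 4 ≤ n) (u : Unit) :
    colF (U1 k n) (Sum.inr (Sum.inr u)) = cJ k n := by
  funext e
  unfold colF
  by_cases h : e ∈ edgesN n
  · rw [dif_pos h]
    show ∑ e₀ ∈ (Finset.Icc (k+1) n).powersetCard 2, vN n e₀ ⟨e, h⟩ = cJ k n e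
    unfold vN cJ
    rw [Finset.sum_ite_eq (ι := Finset ℕ)]
    rfl
  · rw [dif_neg h]
    unfold cJ
    rw [if_neg fun hEJ => h (EJ_subset_edgesN hEJ)]

theorem colF_U2 (hn : k + 4 ≤ n) (p : ↥(Finset.Icc 1 k) ⊕ Unit) :
    colF (U2 k n) p = fun e => Psi k n p (dlt (k+1)) e - Psi k n p (dlt (k+2)) e := by
  cases p with
  | inl j =>
    have hj := Finset.mem_Icc.mp j.2
    show colF (U2 k n) (Sum.inl j) = _
    have h1 : Psi k n (Sum.inl j) (dlt (k+1)) = indE {j.1, k+1} := phiM_delta (memV1 hn)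
    have h2 : Psi k n (Sum.inl j) (dlt (k+2)) = indE {j.1, k+2} := phiM_delta (memV2 hn)
    funext e
    rw [h1, h2]
    unfold colF
    by_cases h : e ∈ edgesN n
    · rw [dif_pos h]
      show vN n {j.1, k+1} ⟨e, h⟩ - vN n {j.1, k+2} ⟨e, h⟩ = _
      rfl
    · rw [dif_neg h]
      unfold indE
      have hne1 : e ≠ ({j.1, k+1} : Finset ℕ) := fun heq => h (by
        rw [heq]
        exact pair_mem_edgesN (Finset.mem_Icc.mpr ⟨hj.1, by omega⟩)
          (Finset.mem_Icc.mpr ⟨by omega, by omega⟩) (by omega))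
      have hne2 : e ≠ ({j.1, k+2} : Finset ℕ) := fun heq => h (by
        rw [heq]
        exact pair_mem_edgesN (Finset.mem_Icc.mpr ⟨hj.1, by omega⟩)
          (Finset.mem_Icc.mpr ⟨by omega, by omega⟩) (by omega))
      rw [if_neg hne1, if_neg hne2]
      ring
  | inr u =>
    funext e
    show colF (U2 k n) (Sum.inr u) e
        = phiJ k n (dlt (k+1)) e - phiJ k n (dlt (k+2)) e
    rw [phiJ_delta, phiJ_delta]
    unfold colF
    by_cases h : e ∈ edgesN n
    · rw [dif_pos h]
      show ∑ i ∈ Finset.Icc (k+3) n, (vN n {k+1, i} ⟨e, h⟩ - vN n {k+2, i} ⟨e, h⟩) = _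
      rw [Finset.sum_sub_distrib]
      have hS1 : ∑ i ∈ Finset.Icc (k+3) n, vN n {k+1, i} ⟨e, h⟩
          = if e ∈ EJ k n ∧ k+1 ∈ e ∧ k+2 ∉ e then 1 else 0 := by
        by_cases hex : ∃ i ∈ Finset.Icc (k+3) n, e = {k+1, i}
        · obtain ⟨i₀, hi₀, rfl⟩ := hex
          have hi₀' := Finset.mem_Icc.mp hi₀
          have hcond : ({k+1, i₀} : Finset ℕ) ∈ EJ k n ∧ k+1 ∈ ({k+1, i₀} : Finset ℕ)
              ∧ k+2 ∉ ({k+1, i₀} : Finset ℕ) := by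
            refine ⟨pair_mem_EJ (memV1 hn) (Finset.mem_Icc.mpr ⟨by omega, hi₀'.2⟩) (by omega),
              Finset.mem_insert_self _ _, ?_⟩
            simp only [Finset.mem_insert, Finset.mem_singleton]
            omega
          rw [if_pos hcond]
          have h5 : ∀ i ∈ Finset.Icc (k+3) n, vN n {k+1, i} ⟨{k+1, i₀}, h⟩
              = if i = i₀ then 1 else 0 := by
            intro i hi
            have hi' := Finset.mem_Icc.mp hi
            unfold vN
            by_cases hii : i = i₀
            · subst hii; simp
            · rw [if_neg, if_neg hii]
              intro heq
              rw [pair_eq_pair_iff] at heq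
              omega
          rw [Finset.sum_congr rfl h5, Finset.sum_ite_eq' (Finset.Icc (k+3) n) i₀
            (fun _ => (1:ℝ)), if_pos hi₀]
        · rw [if_neg, Finset.sum_eq_zero]
          · intro i hi
            exact if_neg fun heq => hex ⟨i, hi, heq⟩
          · rintro ⟨hEJ, h1e, h2e⟩
            obtain ⟨a, b, hab, hee, haV, hbV⟩ := EJ_rep hEJ
            have haV' := Finset.mem_Icc.mp haV
            have hbV' := Finset.mem_Icc.mp hbV
            rw [hee] at h1e h2e
            simp only [Finset.mem_insert, Finset.mem_singleton] at h1e h2e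
            rcases h1e with rfl | rfl
            · exact hex ⟨b, Finset.mem_Icc.mpr ⟨by omega, hbV'.2⟩, hee.trans rfl⟩
            · exact hex ⟨a, Finset.mem_Icc.mpr ⟨by omega, haV'.2⟩,
                hee.trans (Finset.pair_comm a (k+1))⟩
      have hS2 : ∑ i ∈ Finset.Icc (k+3) n, vN n {k+2, i} ⟨e, h⟩
          = if e ∈ EJ k n ∧ k+2 ∈ e ∧ k+1 ∉ e then 1 else 0 := by
        by_cases hex : ∃ i ∈ Finset.Icc (k+3) n, e = {k+2, i}
        · obtain ⟨i₀, hi₀, rfl⟩ := hex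
          have hi₀' := Finset.mem_Icc.mp hi₀
          have hcond : ({k+2, i₀} : Finset ℕ) ∈ EJ k n ∧ k+2 ∈ ({k+2, i₀} : Finset ℕ)
              ∧ k+1 ∉ ({k+2, i₀} : Finset ℕ) := by
            refine ⟨pair_mem_EJ (memV2 hn) (Finset.mem_Icc.mpr ⟨by omega, hi₀'.2⟩) (by omega),
              Finset.mem_insert_self _ _, ?_⟩
            simp only [Finset.mem_insert, Finset.mem_singleton]
            omega
          rw [if_pos hcond]
          have h5 : ∀ i ∈ Finset.Icc (k+3) n, vN n {k+2, i} ⟨{k+2, i₀}, h⟩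
              = if i = i₀ then 1 else 0 := by
            intro i hi
            have hi' := Finset.mem_Icc.mp hi
            unfold vN
            by_cases hii : i = i₀
            · subst hii; simp
            · rw [if_neg, if_neg hii]
              intro heq
              rw [pair_eq_pair_iff] at heq
              omega
          rw [Finset.sum_congr rfl h5, Finset.sum_ite_eq' (Finset.Icc (k+3) n) i₀
            (fun _ => (1:ℝ)), if_pos hi₀]
        · rw [if_neg, Finset.sum_eq_zero]
          · intro i hi
            exact if_neg fun heq => hex ⟨i, hi, heq⟩
          · rintro ⟨hEJ, h2e, h1e⟩
            obtain ⟨a, b, hab, hee, haV, hbV⟩ := EJ_rep hEJ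
            have haV' := Finset.mem_Icc.mp haV
            have hbV' := Finset.mem_Icc.mp hbV
            rw [hee] at h1e h2e
            simp only [Finset.mem_insert, Finset.mem_singleton] at h1e h2e
            rcases h2e with rfl | rfl
            · exact hex ⟨b, Finset.mem_Icc.mpr ⟨by omega, hbV'.2⟩, hee.trans rfl⟩
            · exact hex ⟨a, Finset.mem_Icc.mpr ⟨by omega, haV'.2⟩,
                hee.trans (Finset.pair_comm a (k+2))⟩
      rw [hS1, hS2]
      by_cases hEJ : e ∈ EJ k n
      · simp only [hEJ, true_and, if_true]
        by_cases h1e : k+1 ∈ e <;> by_cases h2e : k+2 ∈ e <;> simp [h1e, h2e]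
      · simp [hEJ]
    · rw [dif_neg h]
      show (0:ℝ) = (if e ∈ EJ k n then if k+1 ∈ e then (1:ℝ) else 0 else 0)
          - (if e ∈ EJ k n then if k+2 ∈ e then (1:ℝ) else 0 else 0)
      rw [if_neg fun hEJ => h (EJ_subset_edgesN hEJ),
        if_neg fun hEJ => h (EJ_subset_edgesN hEJ)]
      ring

/-- The third column vector. -/
def u3F (k n : ℕ) : Finset ℕ → ℝ :=
  fun e => indE {k+1, k+2} e - indE {k+1, k+3} e - indE {k+2, k+4} e + indE {k+3, k+4} e

theorem colF_U3 (hn : k + 4 ≤ n) (u : Unit) : colF (U3 k n) u = u3F k n := by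
  funext e
  unfold colF u3F
  by_cases h : e ∈ edgesN n
  · rw [dif_pos h]
    show vN n {k+1, k+2} ⟨e, h⟩ - vN n {k+1, k+3} ⟨e, h⟩ - vN n {k+2, k+4} ⟨e, h⟩
        + vN n {k+3, k+4} ⟨e, h⟩ = _
    rfl
  · rw [dif_neg h]
    unfold indE
    have hp : ∀ x y : ℕ, k+1 ≤ x → x ≤ n → k+1 ≤ y → y ≤ n → x ≠ y →
        e ≠ ({x, y} : Finset ℕ) := by
      intro x y hx1 hx2 hy1 hy2 hxy heq
      exact h (heq ▸ pair_mem_edgesN (Finset.mem_Icc.mpr ⟨by omega, hx2⟩)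
        (Finset.mem_Icc.mpr ⟨by omega, hy2⟩) hxy)
    rw [if_neg (hp _ _ (by omega) (by omega) (by omega) (by omega) (by omega)),
      if_neg (hp _ _ (by omega) (by omega) (by omega) (by omega) (by omega)),
      if_neg (hp _ _ (by omega) (by omega) (by omega) (by omega) (by omega)),
      if_neg (hp _ _ (by omega) (by omega) (by omega) (by omega) (by omega))]
    ring

end PSDaux
namespace PSDaux

variable {k n : ℕ}

theorem u3F_supp (hn : k + 4 ≤ n) : ∀ e, e ∉ EJ k n → u3F k n e = 0 := by
  intro e h
  unfold u3F indE
  have hp : ∀ x y : ℕ, k+1 ≤ x → x ≤ n → k+1 ≤ y → y ≤ n → x ≠ y →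
      e ≠ ({x, y} : Finset ℕ) := by
    intro x y hx1 hx2 hy1 hy2 hxy heq
    exact h (by
      rw [heq]
      exact pair_mem_EJ (Finset.mem_Icc.mpr ⟨hx1, hx2⟩) (Finset.mem_Icc.mpr ⟨hy1, hy2⟩) hxy)
  rw [if_neg (hp _ _ (by omega) (by omega) (by omega) (by omega) (by omega)),
    if_neg (hp _ _ (by omega) (by omega) (by omega) (by omega) (by omega)),
    if_neg (hp _ _ (by omega) (by omega) (by omega) (by omega) (by omega)),
    if_neg (hp _ _ (by omega) (by omega) (by omega) (by omega) (by omega))]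
  ring

theorem deg_indE {p : Finset ℕ} (hp : p ∈ EJ k n) (a : ℕ) :
    ∑ f ∈ EJ k n, (if a ∈ f then indE p f else 0) = if a ∈ p then 1 else 0 := by
  have h1 : ∀ f ∈ EJ k n, (if a ∈ f then indE p f else 0)
      = if f = p then (if a ∈ p then (1:ℝ) else 0) else 0 := by
    intro f _
    unfold indE
    by_cases hfp : f = p
    · subst hfp
      by_cases h : a ∈ f <;> simp [h]
    · by_cases h : a ∈ f <;> simp [h, hfp]
  rw [Finset.sum_congr rfl h1, Finset.sum_ite_eq' (EJ k n) p _, if_pos hp]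

theorem sum_indE {p : Finset ℕ} (hp : p ∈ EJ k n) :
    ∑ e ∈ EJ k n, indE p e = 1 := by
  unfold indE
  rw [Finset.sum_ite_eq' (EJ k n) p (fun _ => (1:ℝ)), if_pos hp]

theorem u3F_deg (hn : k + 4 ≤ n) : ∀ a ∈ Finset.Icc (k+1) n, degW k n (u3F k n) a = 0 := by
  intro a _
  unfold degW
  have h1 : ∀ f ∈ EJ k n, (if a ∈ f then u3F k n f else 0)
      = ((if a ∈ f then indE {k+1, k+2} f else 0) - (if a ∈ f then indE {k+1, k+3} f else 0)
        - (if a ∈ f then indE {k+2, k+4} f else 0)) + (if a ∈ f then indE {k+3, k+4} f else 0) := by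
    intro f _
    unfold u3F
    by_cases h : a ∈ f <;> simp [h]
  rw [Finset.sum_congr rfl h1, Finset.sum_add_distrib, Finset.sum_sub_distrib,
    Finset.sum_sub_distrib,
    deg_indE (pair_mem_EJ (memV1 hn) (memV2 hn) (by omega)) a,
    deg_indE (pair_mem_EJ (memV1 hn) (memV3 hn) (by omega)) a,
    deg_indE (pair_mem_EJ (memV2 hn) (memV4 hn) (by omega)) a,
    deg_indE (pair_mem_EJ (memV3 hn) (memV4 hn) (by omega)) a]
  simp only [Finset.mem_insert, Finset.mem_singleton]
  split_ifs <;> first | (exfalso; omega) | norm_num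

theorem u3F_sq (hn : k + 4 ≤ n) : ∑ e ∈ EJ k n, u3F k n e ^ 2 = 4 := by
  have h12 : ({k+1, k+2} : Finset ℕ) ≠ {k+1, k+3} := fun h => by
    rw [pair_eq_pair_iff] at h; omega
  have h13 : ({k+1, k+2} : Finset ℕ) ≠ {k+2, k+4} := fun h => by
    rw [pair_eq_pair_iff] at h; omega
  have h14 : ({k+1, k+2} : Finset ℕ) ≠ {k+3, k+4} := fun h => by
    rw [pair_eq_pair_iff] at h; omega
  have h23 : ({k+1, k+3} : Finset ℕ) ≠ {k+2, k+4} := fun h => by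
    rw [pair_eq_pair_iff] at h; omega
  have h24 : ({k+1, k+3} : Finset ℕ) ≠ {k+3, k+4} := fun h => by
    rw [pair_eq_pair_iff] at h; omega
  have h34 : ({k+2, k+4} : Finset ℕ) ≠ {k+3, k+4} := fun h => by
    rw [pair_eq_pair_iff] at h; omega
  have h1 : ∀ e ∈ EJ k n, u3F k n e ^ 2
      = ((indE {k+1, k+2} e + indE {k+1, k+3} e) + indE {k+2, k+4} e) + indE {k+3, k+4} e := by
    intro e _
    unfold u3F indE
    by_cases he1 : e = {k+1, k+2}
    · subst he1
      rw [if_pos rfl, if_neg h12, if_neg h13, if_neg h14]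
      norm_num
    · by_cases he2 : e = {k+1, k+3}
      · subst he2
        rw [if_pos rfl, if_neg he1, if_neg h23, if_neg h24]
        norm_num
      · by_cases he3 : e = {k+2, k+4}
        · subst he3
          rw [if_pos rfl, if_neg he1, if_neg he2, if_neg h34]
          norm_num
        · by_cases he4 : e = {k+3, k+4}
          · subst he4
            rw [if_pos rfl, if_neg he1, if_neg he2, if_neg he3]
            norm_num
          · rw [if_neg he1, if_neg he2, if_neg he3, if_neg he4]
            norm_num
  rw [Finset.sum_congr rfl h1, Finset.sum_add_distrib, Finset.sum_add_distrib,
    Finset.sum_add_distrib,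
    sum_indE (pair_mem_EJ (memV1 hn) (memV2 hn) (by omega)),
    sum_indE (pair_mem_EJ (memV1 hn) (memV3 hn) (by omega)),
    sum_indE (pair_mem_EJ (memV2 hn) (memV4 hn) (by omega)),
    sum_indE (pair_mem_EJ (memV3 hn) (memV4 hn) (by omega))]
  norm_num

theorem sum_dlt {a : ℕ} (ha : a ∈ Finset.Icc (k+1) n) :
    ∑ x ∈ Finset.Icc (k+1) n, dlt a x = 1 := by
  unfold dlt
  rw [Finset.sum_ite_eq' (Finset.Icc (k+1) n) a (fun _ => (1:ℝ)), if_pos ha]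

theorem sum_dd (hn : k + 4 ≤ n) :
    ∑ a ∈ Finset.Icc (k+1) n, (dlt (k+1) a - dlt (k+2) a) = 0 := by
  rw [Finset.sum_sub_distrib, sum_dlt (memV1 hn), sum_dlt (memV2 hn)]
  ring

theorem sum_dd_sq (hn : k + 4 ≤ n) :
    ∑ a ∈ Finset.Icc (k+1) n, (dlt (k+1) a - dlt (k+2) a) * (dlt (k+1) a - dlt (k+2) a)
      = 2 := by
  have h1 : ∀ a ∈ Finset.Icc (k+1) n,
      (dlt (k+1) a - dlt (k+2) a) * (dlt (k+1) a - dlt (k+2) a)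
        = dlt (k+1) a + dlt (k+2) a := by
    intro a _
    unfold dlt
    have : a = k+1 ∨ a = k+2 ∨ (a ≠ k+1 ∧ a ≠ k+2) := by omega
    rcases this with rfl | rfl | ⟨hx, hy⟩
    · rw [if_pos rfl, if_neg (by omega : ¬(k+1 : ℕ) = k+2)]
      norm_num
    · rw [if_pos rfl, if_neg (by omega : ¬(k+2 : ℕ) = k+1)]
      norm_num
    · rw [if_neg hx, if_neg hy]
      norm_num
  rw [Finset.sum_congr rfl h1, Finset.sum_add_distrib, sum_dlt (memV1 hn), sum_dlt (memV2 hn)]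
  norm_num

end PSDaux
namespace PSDaux

variable {k n : ℕ}

/-! ### Decomposition data -/

def SJv (k n : ℕ) (X : Finset ℕ → ℝ) : ℝ := ∑ e ∈ EJ k n, X e

noncomputable def muJv (k n : ℕ) (X : Finset ℕ → ℝ) : ℝ :=
  2 * SJv k n X / (((n - k : ℕ) : ℝ) * (((n - k : ℕ) : ℝ) - 1))

noncomputable def yJv (k n : ℕ) (X : Finset ℕ → ℝ) : ℕ → ℝ :=
  fun a => (degW k n X a - 2 * SJv k n X / ((n - k : ℕ) : ℝ)) / (((n - k : ℕ) : ℝ) - 2)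

noncomputable def muMv (k n : ℕ) (X : Finset ℕ → ℝ) (j : ℕ) : ℝ :=
  (∑ a ∈ Finset.Icc (k+1) n, X {j, a}) / ((n - k : ℕ) : ℝ)

noncomputable def yMv (k n : ℕ) (X : Finset ℕ → ℝ) (j : ℕ) : ℕ → ℝ :=
  fun a => X {j, a} - muMv k n X j

noncomputable def wFv (k n : ℕ) (X : Finset ℕ → ℝ) : Finset ℕ → ℝ :=
  fun e => if e ∈ EJ k n then X e - muJv k n X - phiJ k n (yJv k n X) e else 0

noncomputable def Yv (k n : ℕ) (X : Finset ℕ → ℝ) : (↥(Finset.Icc 1 k) ⊕ Unit) → ℕ → ℝ :=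
  fun p => match p with
  | .inl j => yMv k n X j.1
  | .inr _ => yJv k n X

noncomputable def c1v (k n : ℕ) (X : Finset ℕ → ℝ) : (↥(edgesN k) ⊕ ↥(Finset.Icc 1 k) ⊕ Unit) → ℝ :=
  fun p => match p with
  | .inl e₀ => X e₀.1
  | .inr (.inl j) => muMv k n X j.1
  | .inr (.inr _) => muJv k n X

def u1funv (k n : ℕ) : (↥(edgesN k) ⊕ ↥(Finset.Icc 1 k) ⊕ Unit) → Finset ℕ → ℝ :=
  fun p => match p with
  | .inl e₀ => indE e₀.1
  | .inr (.inl j) => cM k n j.1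
  | .inr (.inr _) => cJ k n

theorem colF_U1_eq (hn : k + 4 ≤ n) (p : ↥(edgesN k) ⊕ ↥(Finset.Icc 1 k) ⊕ Unit) :
    colF (U1 k n) p = u1funv k n p := by
  rcases p with e₀ | j | u
  · exact colF_U1_inl hn e₀
  · exact colF_U1_inlr hn j
  · exact colF_U1_inrr hn u

theorem u1fun_inv {σ : Equiv.Perm ℕ} (hσ : FixPerm n k σ)
    (p : ↥(edgesN k) ⊕ ↥(Finset.Icc 1 k) ⊕ Unit) :
    act σ (u1funv k n p) = u1funv k n p := by
  rcases p with e₀ | j | u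
  · exact act_indEK hσ (mem_edgesN.mp e₀.2).1
  · exact act_cM hσ j.2
  · exact act_cJ hσ

theorem Psi_dd (p : ↥(Finset.Icc 1 k) ⊕ Unit) :
    Psi k n p (fun x => dlt (k+1) x - dlt (k+2) x)
      = fun e => Psi k n p (dlt (k+1)) e - Psi k n p (dlt (k+2)) e := by
  cases p with
  | inl j =>
    funext e
    show phiM k n j.1 _ e = phiM k n j.1 _ e - phiM k n j.1 _ e
    unfold phiM
    rw [← Finset.sum_sub_distrib]
    refine Finset.sum_congr rfl fun a _ => ?_
    by_cases h : e = {j.1, a} <;> simp [h]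
  | inr u =>
    funext e
    show phiJ k n _ e = phiJ k n _ e - phiJ k n _ e
    unfold phiJ
    by_cases h : e ∈ EJ k n
    · rw [if_pos h, if_pos h, if_pos h, ← Finset.sum_sub_distrib]
    · rw [if_neg h, if_neg h, if_neg h]
      ring

/-! ### Cardinality facts -/

theorem cardV (hn : k + 4 ≤ n) : (Finset.Icc (k+1) n).card = n - k := by
  rw [Nat.card_Icc]
  omega

theorem mR_pos (hn : k + 4 ≤ n) : (4 : ℝ) ≤ ((n - k : ℕ) : ℝ) := by
  have : (4 : ℕ) ≤ n - k := by omega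
  exact_mod_cast this

/-! ### Reindexing sums over Johnson edges through a vertex -/

theorem sum_EJ_mem {a : ℕ} (ha : a ∈ Finset.Icc (k+1) n) (F : Finset ℕ → ℝ) :
    ∑ f ∈ EJ k n, (if a ∈ f then F f else 0)
      = ∑ c ∈ (Finset.Icc (k+1) n).erase a, F {a, c} := by
  rw [Finset.sum_ite, Finset.sum_const, smul_zero, add_zero]
  have himg : (EJ k n).filter (fun f => a ∈ f)
      = ((Finset.Icc (k+1) n).erase a).image (fun c => ({a, c} : Finset ℕ)) := by
    ext f
    simp only [Finset.mem_filter, Finset.mem_image, Finset.mem_erase]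
    constructor
    · rintro ⟨hf, haf⟩
      obtain ⟨b, c, hbc, rfl, hbV, hcV⟩ := EJ_rep hf
      rcases Finset.mem_insert.mp haf with rfl | h
      · exact ⟨c, ⟨fun h => hbc h.symm, hcV⟩, rfl⟩
      · rw [Finset.mem_singleton] at h
        subst h
        exact ⟨b, ⟨hbc, hbV⟩, Finset.pair_comm a b⟩
    · rintro ⟨c, ⟨hca, hcV⟩, rfl⟩
      exact ⟨pair_mem_EJ ha hcV (fun h => hca h.symm), Finset.mem_insert_self a {c}⟩
  rw [himg, Finset.sum_image]
  intro c hc c' hc' heq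
  rw [pair_eq_pair_iff] at heq
  have hca := (Finset.mem_erase.mp hc).1
  have hc'a := (Finset.mem_erase.mp hc').1
  omega

theorem card_erase_V {a : ℕ} (ha : a ∈ Finset.Icc (k+1) n) (hn : k + 4 ≤ n) :
    (((Finset.Icc (k+1) n).erase a).card : ℝ) = ((n - k : ℕ) : ℝ) - 1 := by
  rw [Finset.card_erase_of_mem ha, cardV hn]
  have : (1 : ℕ) ≤ n - k := by omega
  push_cast [Nat.cast_sub this]
  ring

/-! ### Sum-zero facts -/

theorem sum_yM (hn : k + 4 ≤ n) (X : Finset ℕ → ℝ) (j : ℕ) :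
    ∑ a ∈ Finset.Icc (k+1) n, yMv k n X j a = 0 := by
  have hm : ((n - k : ℕ) : ℝ) ≠ 0 := by linarith [mR_pos (k := k) (n := n) hn]
  unfold yMv muMv
  rw [Finset.sum_sub_distrib, Finset.sum_const, cardV hn, nsmul_eq_mul]
  field_simp
  ring

theorem sum_yJ (hn : k + 4 ≤ n) (X : Finset ℕ → ℝ) :
    ∑ a ∈ Finset.Icc (k+1) n, yJv k n X a = 0 := by
  have hm : ((n - k : ℕ) : ℝ) ≠ 0 := by linarith [mR_pos (k := k) (n := n) hn]
  have hm2 : ((n - k : ℕ) : ℝ) - 2 ≠ 0 := by linarith [mR_pos (k := k) (n := n) hn]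
  unfold yJv
  rw [← Finset.sum_div, Finset.sum_sub_distrib, Finset.sum_const, cardV hn, nsmul_eq_mul,
    double_count]
  show (2 * SJv k n X - _ * (2 * SJv k n X / _)) / _ = 0
  field_simp
  ring

theorem sum_Yv (hn : k + 4 ≤ n) (X : Finset ℕ → ℝ) (p : ↥(Finset.Icc 1 k) ⊕ Unit) :
    ∑ a ∈ Finset.Icc (k+1) n, Yv k n X p a = 0 := by
  cases p with
  | inl j => exact sum_yM hn X j.1
  | inr u => exact sum_yJ hn X

/-! ### `wF` support and degrees -/

theorem wF_supp (X : Finset ℕ → ℝ) : ∀ e, e ∉ EJ k n → wFv k n X e = 0 := by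
  intro e h
  unfold wFv
  rw [if_neg h]

theorem wF_deg (hn : k + 4 ≤ n) (X : Finset ℕ → ℝ) :
    ∀ a ∈ Finset.Icc (k+1) n, degW k n (wFv k n X) a = 0 := by
  intro a ha
  have hm4 := mR_pos (k := k) (n := n) hn
  have hm : ((n - k : ℕ) : ℝ) ≠ 0 := by linarith
  have hm1 : ((n - k : ℕ) : ℝ) - 1 ≠ 0 := by linarith
  have hm2 : ((n - k : ℕ) : ℝ) - 2 ≠ 0 := by linarith
  have haV := Finset.mem_Icc.mp ha
  unfold degW
  have h1 : ∀ f ∈ EJ k n, (if a ∈ f then wFv k n X f else 0)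
      = if a ∈ f then X f - muJv k n X - phiJ k n (yJv k n X) f else 0 := by
    intro f hf
    unfold wFv
    rw [if_pos hf]
  rw [Finset.sum_congr rfl h1, sum_EJ_mem ha]
  have h2 : ∀ c ∈ (Finset.Icc (k+1) n).erase a,
      X {a, c} - muJv k n X - phiJ k n (yJv k n X) {a, c}
        = X {a, c} - muJv k n X - (yJv k n X a + yJv k n X c) := by
    intro c hc
    obtain ⟨hca, hcV⟩ := Finset.mem_erase.mp hc
    unfold phiJ
    rw [if_pos (pair_mem_EJ ha hcV (fun h => hca h.symm)),
      Finset.sum_pair (fun h => hca h.symm)]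
  rw [Finset.sum_congr rfl h2]
  have h3 : ∑ c ∈ (Finset.Icc (k+1) n).erase a,
      (X {a, c} - muJv k n X - (yJv k n X a + yJv k n X c))
      = (∑ c ∈ (Finset.Icc (k+1) n).erase a, X {a, c})
        - (((Finset.Icc (k+1) n).erase a).card : ℝ) * muJv k n X
        - ((((Finset.Icc (k+1) n).erase a).card : ℝ) * yJv k n X a
          + ∑ c ∈ (Finset.Icc (k+1) n).erase a, yJv k n X c) := by
    rw [Finset.sum_sub_distrib, Finset.sum_sub_distrib, Finset.sum_add_distrib,
      Finset.sum_const, Finset.sum_const, nsmul_eq_mul, nsmul_eq_mul]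
  rw [h3, card_erase_V ha hn]
  have h4 : ∑ c ∈ (Finset.Icc (k+1) n).erase a, X {a, c} = degW k n X a := by
    rw [← sum_EJ_mem ha X]
    rfl
  have h5 : ∑ c ∈ (Finset.Icc (k+1) n).erase a, yJv k n X c = - yJv k n X a := by
    have := Finset.add_sum_erase (Finset.Icc (k+1) n) (yJv k n X) ha
    rw [sum_yJ hn X] at this
    linarith
  rw [h4, h5]
  unfold yJv muJv
  field_simp
  ring

end PSDaux
namespace PSDaux

variable {k n : ℕ}

noncomputable def x1v (k n : ℕ) (X : Finset ℕ → ℝ) : Finset ℕ → ℝ :=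
  fun e => ∑ p : (↥(edgesN k) ⊕ ↥(Finset.Icc 1 k) ⊕ Unit), c1v k n X p * u1funv k n p e

noncomputable def x2v (k n : ℕ) (X : Finset ℕ → ℝ) : Finset ℕ → ℝ :=
  fun e => ∑ p : (↥(Finset.Icc 1 k) ⊕ Unit), Psi k n p (Yv k n X p) e

theorem x1v_eval (X : Finset ℕ → ℝ) (e : Finset ℕ) :
    x1v k n X e = (∑ e₀ ∈ edgesN k, X e₀ * indE e₀ e)
      + ((∑ j ∈ Finset.Icc 1 k, muMv k n X j * cM k n j e) + muJv k n X * cJ k n e) := by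
  unfold x1v
  rw [Fintype.sum_sum_type, Fintype.sum_sum_type]
  congr 1
  · rw [← Finset.sum_coe_sort (edgesN k) (fun t => X t * indE t e)]
    rfl
  · congr 1
    · rw [← Finset.sum_coe_sort (Finset.Icc 1 k) (fun t => muMv k n X t * cM k n t e)]
      rfl
    · rw [Fintype.sum_unique]
      rfl

theorem x2v_eval (X : Finset ℕ → ℝ) (e : Finset ℕ) :
    x2v k n X e = (∑ j ∈ Finset.Icc 1 k, phiM k n j (yMv k n X j) e)
      + phiJ k n (yJv k n X) e := by
  unfold x2v
  rw [Fintype.sum_sum_type]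
  congr 1
  · rw [← Finset.sum_coe_sort (Finset.Icc 1 k) (fun t => phiM k n t (yMv k n X t) e)]
    rfl
  · rw [Fintype.sum_unique]
    rfl

theorem edge_cases (he : e ∈ edgesN n) :
    e ∈ edgesN k ∨ (∃ j a, j ∈ Finset.Icc 1 k ∧ a ∈ Finset.Icc (k+1) n ∧ e = {j, a})
      ∨ e ∈ EJ k n := by
  obtain ⟨a, b, hab, rfl, haI, hbI⟩ := edge_rep he
  have ha' := Finset.mem_Icc.mp haI
  have hb' := Finset.mem_Icc.mp hbI
  by_cases hak : a ≤ k <;> by_cases hbk : b ≤ k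
  · left
    refine mem_edgesN (n := k) |>.mpr ⟨?_, Finset.card_pair hab⟩
    intro x hx
    simp only [Finset.mem_insert, Finset.mem_singleton] at hx
    rcases hx with rfl | rfl
    · exact Finset.mem_Icc.mpr ⟨ha'.1, hak⟩
    · exact Finset.mem_Icc.mpr ⟨hb'.1, hbk⟩
  · right; left
    exact ⟨a, b, Finset.mem_Icc.mpr ⟨ha'.1, hak⟩, Finset.mem_Icc.mpr ⟨by omega, hb'.2⟩, rfl⟩
  · right; left
    exact ⟨b, a, Finset.mem_Icc.mpr ⟨hb'.1, hbk⟩, Finset.mem_Icc.mpr ⟨by omega, ha'.2⟩,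
      Finset.pair_comm a b⟩
  · right; right
    exact pair_mem_EJ (Finset.mem_Icc.mpr ⟨by omega, ha'.2⟩)
      (Finset.mem_Icc.mpr ⟨by omega, hb'.2⟩) hab

/-- Vanishing of `cM`-type sums. -/
theorem cM_zero {j : ℕ} {e : Finset ℕ}
    (hno : ∀ a ∈ Finset.Icc (k+1) n, e ≠ {j, a}) : cM k n j e = 0 := by
  unfold cM indE
  exact Finset.sum_eq_zero fun a ha => if_neg (hno a ha)

theorem phiM_zero {j : ℕ} {y : ℕ → ℝ} {e : Finset ℕ}
    (hno : ∀ a ∈ Finset.Icc (k+1) n, e ≠ {j, a}) : phiM k n j y e = 0 := by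
  unfold phiM
  exact Finset.sum_eq_zero fun a ha => if_neg (hno a ha)

theorem sum_indE_eval {X : Finset ℕ → ℝ} {e : Finset ℕ} (he : e ∈ edgesN k) :
    ∑ e₀ ∈ edgesN k, X e₀ * indE e₀ e = X e := by
  have h1 : ∀ e₀ ∈ edgesN k, X e₀ * indE e₀ e = if e = e₀ then X e₀ else 0 := by
    intro e₀ _
    unfold indE
    by_cases h : e = e₀ <;> simp [h]
  rw [Finset.sum_congr rfl h1, Finset.sum_ite_eq, if_pos he]

theorem sum_indE_zero {X : Finset ℕ → ℝ} {e : Finset ℕ}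
    (hne : ∀ e₀ ∈ edgesN k, e ≠ e₀) :
    ∑ e₀ ∈ edgesN k, X e₀ * indE e₀ e = 0 := by
  refine Finset.sum_eq_zero fun e₀ he₀ => ?_
  unfold indE
  rw [if_neg (hne e₀ he₀), mul_zero]

theorem mem_edgesK_le {e₀ : Finset ℕ} (he₀ : e₀ ∈ edgesN k) {x : ℕ} (hx : x ∈ e₀) : x ≤ k :=
  (Finset.mem_Icc.mp ((mem_edgesN.mp he₀).1 hx)).2

theorem cM_mixed {j₀ a₀ : ℕ} (hj₀ : j₀ ∈ Finset.Icc 1 k) (ha₀ : a₀ ∈ Finset.Icc (k+1) n)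
    {j : ℕ} (hj : j ∈ Finset.Icc 1 k) :
    cM k n j {j₀, a₀} = if j = j₀ then 1 else 0 := by
  have hj' := Finset.mem_Icc.mp hj
  have hj₀' := Finset.mem_Icc.mp hj₀
  have ha₀' := Finset.mem_Icc.mp ha₀
  unfold cM indE
  by_cases hjj : j = j₀
  · subst hjj
    rw [if_pos rfl]
    have h1 : ∀ a ∈ Finset.Icc (k+1) n, (if ({j, a₀} : Finset ℕ) = {j, a} then (1:ℝ) else 0)
        = if a = a₀ then 1 else 0 := by
      intro a ha
      have ha' := Finset.mem_Icc.mp ha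
      by_cases h : a = a₀
      · subst h; simp
      · rw [if_neg, if_neg h]
        intro heq
        rw [pair_eq_pair_iff] at heq
        omega
    rw [Finset.sum_congr rfl h1, Finset.sum_ite_eq' (Finset.Icc (k+1) n) a₀ (fun _ => (1:ℝ)),
      if_pos ha₀]
  · rw [if_neg hjj]
    refine Finset.sum_eq_zero fun a ha => ?_
    have ha' := Finset.mem_Icc.mp ha
    rw [if_neg]
    intro heq
    rw [pair_eq_pair_iff] at heq
    omega

theorem phiM_mixed {j₀ a₀ : ℕ} (hj₀ : j₀ ∈ Finset.Icc 1 k) (ha₀ : a₀ ∈ Finset.Icc (k+1) n)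
    {j : ℕ} (hj : j ∈ Finset.Icc 1 k) (y : ℕ → ℝ) :
    phiM k n j y {j₀, a₀} = if j = j₀ then y a₀ else 0 := by
  have hj' := Finset.mem_Icc.mp hj
  have hj₀' := Finset.mem_Icc.mp hj₀
  have ha₀' := Finset.mem_Icc.mp ha₀
  unfold phiM
  by_cases hjj : j = j₀
  · subst hjj
    rw [if_pos rfl]
    have h1 : ∀ a ∈ Finset.Icc (k+1) n, (if ({j, a₀} : Finset ℕ) = {j, a} then y a else 0)
        = if a = a₀ then y a else 0 := by
      intro a ha
      have ha' := Finset.mem_Icc.mp ha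
      by_cases h : a = a₀
      · subst h; simp
      · rw [if_neg, if_neg h]
        intro heq
        rw [pair_eq_pair_iff] at heq
        omega
    rw [Finset.sum_congr rfl h1, Finset.sum_ite_eq' (Finset.Icc (k+1) n) a₀ y, if_pos ha₀]
  · rw [if_neg hjj]
    refine Finset.sum_eq_zero fun a ha => ?_
    have ha' := Finset.mem_Icc.mp ha
    rw [if_neg]
    intro heq
    rw [pair_eq_pair_iff] at heq
    omega

theorem decomp (hn : k + 4 ≤ n) (X : Finset ℕ → ℝ) (hX : ∀ e, e ∉ edgesN n → X e = 0) :
    ∀ e, X e = x1v k n X e + x2v k n X e + wFv k n X e := by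
  intro e
  rw [x1v_eval, x2v_eval]
  by_cases hE : e ∈ edgesN n
  · rcases edge_cases hE with hK | ⟨j₀, a₀, hj₀, ha₀, rfl⟩ | hJ
    · -- e within [k]
      have hle : ∀ x ∈ e, x ≤ k := fun x hx => mem_edgesK_le hK hx
      have hnomix : ∀ j ∈ Finset.Icc 1 k, ∀ a ∈ Finset.Icc (k+1) n, e ≠ {j, a} := by
        intro j _ a ha heq
        have : a ∈ e := heq ▸ Finset.mem_insert_of_mem (Finset.mem_singleton_self a)
        have := hle a this
        have := (Finset.mem_Icc.mp ha).1
        omega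
      have hnJ : e ∉ EJ k n := by
        intro hJ
        obtain ⟨a, b, hab, rfl, haV, hbV⟩ := EJ_rep hJ
        have := hle a (Finset.mem_insert_self a {b})
        have := (Finset.mem_Icc.mp haV).1
        omega
      rw [sum_indE_eval hK,
        Finset.sum_eq_zero (fun j hj => by rw [cM_zero (hnomix j hj), mul_zero]),
        Finset.sum_eq_zero (fun j hj => phiM_zero (hnomix j hj) (y := yMv k n X j))]
      unfold cJ phiJ wFv
      rw [if_neg hnJ, if_neg hnJ, if_neg hnJ]
      ring
    · -- mixed edge
      have hj₀' := Finset.mem_Icc.mp hj₀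
      have ha₀' := Finset.mem_Icc.mp ha₀
      have hnK : ∀ e₀ ∈ edgesN k, ({j₀, a₀} : Finset ℕ) ≠ e₀ := by
        intro e₀ he₀ heq
        have : a₀ ∈ e₀ := heq ▸ Finset.mem_insert_of_mem (Finset.mem_singleton_self a₀)
        have := mem_edgesK_le he₀ this
        omega
      have hnJ : ({j₀, a₀} : Finset ℕ) ∉ EJ k n := by
        intro hJ
        have : j₀ ∈ Finset.Icc (k+1) n := (mem_EJ.mp hJ).1 (Finset.mem_insert_self j₀ {a₀})
        have := (Finset.mem_Icc.mp this).1
        omega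
      rw [sum_indE_zero hnK]
      have hcMs : ∑ j ∈ Finset.Icc 1 k, muMv k n X j * cM k n j {j₀, a₀}
          = muMv k n X j₀ := by
        have h1 : ∀ j ∈ Finset.Icc 1 k, muMv k n X j * cM k n j {j₀, a₀}
            = if j = j₀ then muMv k n X j else 0 := by
          intro j hj
          rw [cM_mixed hj₀ ha₀ hj]
          by_cases h : j = j₀ <;> simp [h]
        rw [Finset.sum_congr rfl h1, Finset.sum_ite_eq' (Finset.Icc 1 k) j₀ (muMv k n X),
          if_pos hj₀]
      have hphiMs : ∑ j ∈ Finset.Icc 1 k, phiM k n j (yMv k n X j) {j₀, a₀}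
          = yMv k n X j₀ a₀ := by
        have h1 : ∀ j ∈ Finset.Icc 1 k, phiM k n j (yMv k n X j) {j₀, a₀}
            = if j = j₀ then yMv k n X j a₀ else 0 := by
          intro j hj
          rw [phiM_mixed hj₀ ha₀ hj]
        rw [Finset.sum_congr rfl h1,
          Finset.sum_ite_eq' (Finset.Icc 1 k) j₀ (fun j => yMv k n X j a₀), if_pos hj₀]
      rw [hcMs, hphiMs]
      unfold cJ phiJ wFv yMv
      rw [if_neg hnJ, if_neg hnJ, if_neg hnJ]
      ring
    · -- Johnson edge
      have hsubV := (mem_EJ.mp hJ).1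
      have hne : e.Nonempty := Finset.card_pos.mp (by rw [(mem_EJ.mp hJ).2]; omega)
      obtain ⟨x, hx⟩ := hne
      have hxV := Finset.mem_Icc.mp (hsubV hx)
      have hnK : ∀ e₀ ∈ edgesN k, e ≠ e₀ := by
        intro e₀ he₀ heq
        have := mem_edgesK_le he₀ (heq ▸ hx)
        omega
      have hnomix : ∀ j ∈ Finset.Icc 1 k, ∀ a ∈ Finset.Icc (k+1) n, e ≠ {j, a} := by
        intro j hj a _ heq
        have hj' := Finset.mem_Icc.mp hj
        have : j ∈ e := heq ▸ Finset.mem_insert_self j {a}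
        have := (Finset.mem_Icc.mp (hsubV this)).1
        omega
      rw [sum_indE_zero hnK,
        Finset.sum_eq_zero (fun j hj => by rw [cM_zero (hnomix j hj), mul_zero]),
        Finset.sum_eq_zero (fun j hj => phiM_zero (hnomix j hj) (y := yMv k n X j))]
      unfold cJ wFv
      rw [if_pos hJ, if_pos hJ]
      ring
  · -- not an edge at all
    have hnK : ∀ e₀ ∈ edgesN k, e ≠ e₀ := by
      intro e₀ he₀ heq
      exact hE (heq ▸ edgesK_sub (by omega) he₀)
    have hnomix : ∀ j ∈ Finset.Icc 1 k, ∀ a ∈ Finset.Icc (k+1) n, e ≠ {j, a} := by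
      intro j hj a ha heq
      have hj' := Finset.mem_Icc.mp hj
      have ha' := Finset.mem_Icc.mp ha
      refine hE (heq ▸ pair_mem_edgesN ?_ ?_ ?_)
      · exact Finset.mem_Icc.mpr ⟨hj'.1, by omega⟩
      · exact Finset.mem_Icc.mpr ⟨by omega, ha'.2⟩
      · omega
    have hnJ : e ∉ EJ k n := fun h => hE (EJ_subset_edgesN h)
    rw [sum_indE_zero hnK,
      Finset.sum_eq_zero (fun j hj => by rw [cM_zero (hnomix j hj), mul_zero]),
      Finset.sum_eq_zero (fun j hj => phiM_zero (hnomix j hj) (y := yMv k n X j))]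
    unfold cJ phiJ wFv
    rw [if_neg hnJ, if_neg hnJ, if_neg hnJ, hX e hE]
    ring

end PSDaux
namespace PSDaux

variable {k n : ℕ} {A : Matrix ↥(edgesN n) ↥(edgesN n) ℝ}

theorem Qf_sum_left' {ι : Type*} (s : Finset ι) (F : ι → Finset ℕ → ℝ) (Z : Finset ℕ → ℝ) :
    Qf A (fun e => ∑ i ∈ s, F i e) Z = ∑ i ∈ s, Qf A (F i) Z := by
  have h := Qf_sum_left (A := A) s (fun _ => (1:ℝ)) F Z
  simpa using h

theorem Qf_sum_right' {ι : Type*} (s : Finset ι) (F : ι → Finset ℕ → ℝ) (X : Finset ℕ → ℝ) :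
    Qf A X (fun f => ∑ i ∈ s, F i f) = ∑ i ∈ s, Qf A X (F i) := by
  have h := Qf_sum_right (A := A) s (fun _ => (1:ℝ)) F X
  simpa using h

theorem Qf_expand3 (X1 X2 X3 : Finset ℕ → ℝ) :
    Qf A (fun e => X1 e + X2 e + X3 e) (fun e => X1 e + X2 e + X3 e)
      = Qf A X1 X1 + Qf A X1 X2 + Qf A X1 X3 + Qf A X2 X1 + Qf A X2 X2 + Qf A X2 X3
        + Qf A X3 X1 + Qf A X3 X2 + Qf A X3 X3 := by
  unfold Qf
  have h : ∀ e f, (X1 e + X2 e + X3 e) * (Bm A e f * (X1 f + X2 f + X3 f))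
      = X1 e * (Bm A e f * X1 f) + X1 e * (Bm A e f * X2 f) + X1 e * (Bm A e f * X3 f)
        + X2 e * (Bm A e f * X1 f) + X2 e * (Bm A e f * X2 f) + X2 e * (Bm A e f * X3 f)
        + X3 e * (Bm A e f * X1 f) + X3 e * (Bm A e f * X2 f) + X3 e * (Bm A e f * X3 f) :=
    fun e f => by ring
  rw [Finset.sum_congr rfl fun e _ => Finset.sum_congr rfl fun f _ => h e f]
  simp only [Finset.sum_add_distrib]

def Xext (n : ℕ) (x : ↥(edgesN n) → ℝ) : Finset ℕ → ℝ :=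
  fun e => if h : e ∈ edgesN n then x ⟨e, h⟩ else 0

theorem dot_eq_Qf (A : Matrix ↥(edgesN n) ↥(edgesN n) ℝ) (x : ↥(edgesN n) → ℝ) :
    x ⬝ᵥ (A *ᵥ x) = Qf A (Xext n x) (Xext n x) := by
  have h1 : x ⬝ᵥ (A *ᵥ x) = ∑ g : ↥(edgesN n), ∑ h : ↥(edgesN n), x g * (A g h * x h) := by
    simp [dotProduct, Matrix.mulVec, Finset.mul_sum]
  rw [h1]
  unfold Qf
  rw [← Finset.sum_coe_sort (edgesN n)
      (fun e => ∑ f ∈ edgesN n, Xext n x e * (Bm A e f * Xext n x f))]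
  refine Finset.sum_congr rfl fun g _ => ?_
  rw [← Finset.sum_coe_sort (edgesN n) (fun f => Xext n x g.1 * (Bm A g.1 f * Xext n x f))]
  refine Finset.sum_congr rfl fun h _ => ?_
  show x g * (A g h * x h) = Xext n x g.1 * (Bm A g.1 h.1 * Xext n x h.1)
  unfold Xext Bm
  rw [dif_pos g.2, dif_pos h.2, dif_pos g.2, dif_pos h.2]

section Main

variable (hn : k + 4 ≤ n) (hsym : A.IsSymm)
  (hinv : ∀ σ : Equiv.Perm ℕ, FixPerm n k σ →
      ∀ e f : ↥(edgesN n), A (permEdge n σ e) (permEdge n σ f) = A e f)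
include hn hsym hinv

theorem hb1 (p q : ↥(edgesN k) ⊕ ↥(Finset.Icc 1 k) ⊕ Unit) :
    Qf A (u1funv k n p) (u1funv k n q) = ((U1 k n)ᵀ * A * U1 k n) p q := by
  rw [← colF_U1_eq hn p, ← colF_U1_eq hn q, ← block_eq]

theorem hb2 (p q : ↥(Finset.Icc 1 k) ⊕ Unit) :
    ((U2 k n)ᵀ * A * U2 k n) p q
      = (Qf A (Psi k n p (dlt (k+1))) (Psi k n q (dlt (k+1)))
          - Qf A (Psi k n p (dlt (k+1))) (Psi k n q (dlt (k+2)))) * 2 := by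
  rw [block_eq, colF_U2 hn p, colF_U2 hn q, ← Psi_dd p, ← Psi_dd q,
    Qf_Psi_Psi hinv hn p q _ _ (sum_dd hn), sum_dd_sq hn]

theorem hb3 :
    ((U3 k n)ᵀ * A * U3 k n) () ()
      = (Bm A {k+1, k+2} {k+1, k+2} - 2 * Bm A {k+1, k+2} {k+1, k+3}
          + Bm A {k+1, k+2} {k+3, k+4}) * 4 := by
  rw [block_eq, colF_U3 hn (), Qf_W3 hinv hn (u3F_supp hn) (u3F_deg hn), u3F_sq hn]

theorem main_nonneg
    (h1 : ((U1 k n)ᵀ * A * U1 k n).PosSemidef)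
    (h2 : ((U2 k n)ᵀ * A * U2 k n).PosSemidef)
    (h3 : ((U3 k n)ᵀ * A * U3 k n).PosSemidef)
    (x : ↥(edgesN n) → ℝ) : 0 ≤ x ⬝ᵥ (A *ᵥ x) := by
  set X := Xext n x with hXdef
  have hX : ∀ e, e ∉ edgesN n → X e = 0 := fun e he => dif_neg he
  rw [dot_eq_Qf, ← hXdef,
    Qf_congr (decomp hn X hX) (decomp hn X hX), Qf_expand3]
  -- cross terms vanish
  have hwsupp := wF_supp (k := k) (n := n) X
  have hwdeg := wF_deg hn X
  have c12 : Qf A (x1v k n X) (x2v k n X) = 0 := by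
    unfold x1v x2v
    rw [Qf_sum_left]
    refine Finset.sum_eq_zero fun p _ => ?_
    rw [Qf_sum_right']
    rw [Finset.sum_eq_zero fun q _ =>
      cross_u_Psi hinv hn (fun σ hσ => u1fun_inv hσ p) q (Yv k n X q) (sum_Yv hn X q),
      mul_zero]
  have c13 : Qf A (x1v k n X) (wFv k n X) = 0 := by
    unfold x1v
    rw [Qf_sum_left]
    refine Finset.sum_eq_zero fun p _ => ?_
    rw [cross_u_W3 hinv hn (fun σ hσ => u1fun_inv hσ p) hwsupp hwdeg, mul_zero]
  have c23 : Qf A (x2v k n X) (wFv k n X) = 0 := by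
    unfold x2v
    rw [Qf_sum_left']
    exact Finset.sum_eq_zero fun q _ =>
      cross_Psi_W3 hinv hn q (Yv k n X q) hwsupp hwdeg
  -- diagonal terms
  have q11 : 0 ≤ Qf A (x1v k n X) (x1v k n X) := by
    have heq : Qf A (x1v k n X) (x1v k n X)
        = c1v k n X ⬝ᵥ (((U1 k n)ᵀ * A * U1 k n) *ᵥ c1v k n X) := by
      unfold x1v
      rw [Qf_sum_left]
      rw [show c1v k n X ⬝ᵥ (((U1 k n)ᵀ * A * U1 k n) *ᵥ c1v k n X)
          = ∑ p : (↥(edgesN k) ⊕ ↥(Finset.Icc 1 k) ⊕ Unit), c1v k n X p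
            * ∑ q : (↥(edgesN k) ⊕ ↥(Finset.Icc 1 k) ⊕ Unit),
              ((U1 k n)ᵀ * A * U1 k n) p q * c1v k n X q from by
        simp [dotProduct, Matrix.mulVec]]
      refine Finset.sum_congr rfl fun p _ => ?_
      rw [Qf_sum_right, Finset.mul_sum, Finset.mul_sum]
      refine Finset.sum_congr rfl fun q _ => ?_
      rw [hb1 hn hsym hinv p q]
      ring
    rw [heq]
    have := h1.dotProduct_mulVec_nonneg (c1v k n X)
    rwa [show star (c1v k n X) = c1v k n X from funext fun i => star_trivial _] at this
  have q22 : 0 ≤ Qf A (x2v k n X) (x2v k n X) := by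
    have hPP : ∀ p q : ↥(Finset.Icc 1 k) ⊕ Unit,
        Qf A (Psi k n p (Yv k n X p)) (Psi k n q (Yv k n X q))
          = (((U2 k n)ᵀ * A * U2 k n) p q / 2)
            * ∑ a ∈ Finset.Icc (k+1) n, Yv k n X p a * Yv k n X q a := by
      intro p q
      rw [Qf_Psi_Psi hinv hn p q _ _ (sum_Yv hn X q)]
      have := hb2 hn hsym hinv (A := A) p q
      congr 1
      linarith
    have heq : Qf A (x2v k n X) (x2v k n X)
        = ∑ a ∈ Finset.Icc (k+1) n, ∑ p : ↥(Finset.Icc 1 k) ⊕ Unit,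
            ∑ q : ↥(Finset.Icc 1 k) ⊕ Unit,
              (((U2 k n)ᵀ * A * U2 k n) p q / 2) * (Yv k n X p a * Yv k n X q a) := by
      unfold x2v
      rw [Qf_sum_left']
      calc ∑ p : ↥(Finset.Icc 1 k) ⊕ Unit,
            Qf A (Psi k n p (Yv k n X p))
              (fun e => ∑ q : ↥(Finset.Icc 1 k) ⊕ Unit, Psi k n q (Yv k n X q) e)
          = ∑ p : ↥(Finset.Icc 1 k) ⊕ Unit, ∑ q : ↥(Finset.Icc 1 k) ⊕ Unit,
              ∑ a ∈ Finset.Icc (k+1) n,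
                (((U2 k n)ᵀ * A * U2 k n) p q / 2) * (Yv k n X p a * Yv k n X q a) := by
            refine Finset.sum_congr rfl fun p _ => ?_
            rw [Qf_sum_right']
            refine Finset.sum_congr rfl fun q _ => ?_
            rw [hPP p q, Finset.mul_sum]
        _ = ∑ p : ↥(Finset.Icc 1 k) ⊕ Unit, ∑ a ∈ Finset.Icc (k+1) n,
              ∑ q : ↥(Finset.Icc 1 k) ⊕ Unit,
                (((U2 k n)ᵀ * A * U2 k n) p q / 2) * (Yv k n X p a * Yv k n X q a) :=
            Finset.sum_congr rfl fun p _ => Finset.sum_comm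
        _ = ∑ a ∈ Finset.Icc (k+1) n, ∑ p : ↥(Finset.Icc 1 k) ⊕ Unit,
              ∑ q : ↥(Finset.Icc 1 k) ⊕ Unit,
                (((U2 k n)ᵀ * A * U2 k n) p q / 2) * (Yv k n X p a * Yv k n X q a) :=
            Finset.sum_comm
    rw [heq]
    refine Finset.sum_nonneg fun a _ => ?_
    have hv := h2.dotProduct_mulVec_nonneg (fun p => Yv k n X p a)
    rw [show star (fun p => Yv k n X p a) = fun p => Yv k n X p a from
      funext fun i => star_trivial _] at hv
    have hdot : (fun p => Yv k n X p a) ⬝ᵥ (((U2 k n)ᵀ * A * U2 k n) *ᵥ fun p => Yv k n X p a)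
        = ∑ p : ↥(Finset.Icc 1 k) ⊕ Unit, ∑ q : ↥(Finset.Icc 1 k) ⊕ Unit,
            Yv k n X p a * (((U2 k n)ᵀ * A * U2 k n) p q * Yv k n X q a) := by
      simp only [dotProduct, Matrix.mulVec, Finset.mul_sum]
    have hhalf : ∑ p : ↥(Finset.Icc 1 k) ⊕ Unit, ∑ q : ↥(Finset.Icc 1 k) ⊕ Unit,
          (((U2 k n)ᵀ * A * U2 k n) p q / 2) * (Yv k n X p a * Yv k n X q a)
        = ((fun p => Yv k n X p a) ⬝ᵥ (((U2 k n)ᵀ * A * U2 k n) *ᵥ fun p => Yv k n X p a))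
          / 2 := by
      rw [hdot, Finset.sum_div]
      refine Finset.sum_congr rfl fun p _ => ?_
      rw [Finset.sum_div]
      exact Finset.sum_congr rfl fun q _ => by ring
    rw [hhalf]
    linarith
  have q33 : 0 ≤ Qf A (wFv k n X) (wFv k n X) := by
    rw [Qf_W3 hinv hn hwsupp hwdeg]
    have hl : 0 ≤ ((U3 k n)ᵀ * A * U3 k n) () () := by
      have := h3.dotProduct_mulVec_nonneg (fun _ => 1)
      rwa [show star (fun _ : Unit => (1:ℝ)) = fun _ => 1 from funext fun i => star_trivial _,
        show (fun _ : Unit => (1:ℝ)) ⬝ᵥ (((U3 k n)ᵀ * A * U3 k n) *ᵥ fun _ => 1)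
          = ((U3 k n)ᵀ * A * U3 k n) () () from by
            simp [dotProduct, Matrix.mulVec]] at this
    rw [hb3 hn hsym hinv (A := A)] at hl
    have hsq : 0 ≤ ∑ e ∈ EJ k n, wFv k n X e ^ 2 :=
      Finset.sum_nonneg fun e _ => sq_nonneg _
    nlinarith
  have c21 : Qf A (x2v k n X) (x1v k n X) = 0 := by rw [Qf_comm hsym, c12]
  have c31 : Qf A (wFv k n X) (x1v k n X) = 0 := by rw [Qf_comm hsym, c13]
  have c32 : Qf A (wFv k n X) (x2v k n X) = 0 := by rw [Qf_comm hsym, c23]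
  rw [c12, c13, c21, c23, c31, c32]
  linarith

end Main

end PSDaux

/-- **Block-diagonalization criterion:** a symmetric `S_{n-k}`-invariant matrix `A`
indexed by the edges of `[n]` (`n ≥ k+4`) is positive semidefinite iff the three
matrices `Uᵢᵀ A Uᵢ`, `i = 1,2,3`, are positive semidefinite. -/
theorem PSD_iff_blocks_PSD (k n : ℕ) (hn : k + 4 ≤ n)
    (A : Matrix ↥(edgesN n) ↥(edgesN n) ℝ) (hsym : A.IsSymm)
    (hinv : ∀ σ : Equiv.Perm ℕ, FixPerm n k σ →
      ∀ e f : ↥(edgesN n), A (permEdge n σ e) (permEdge n σ f) = A e f) :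
    A.PosSemidef ↔
      ((U1 k n)ᵀ * A * U1 k n).PosSemidef
        ∧ ((U2 k n)ᵀ * A * U2 k n).PosSemidef
        ∧ ((U3 k n)ᵀ * A * U3 k n).PosSemidef := by
  constructor
  · intro hA
    have h1 := hA.conjTranspose_mul_mul_same (U1 k n)
    have h2 := hA.conjTranspose_mul_mul_same (U2 k n)
    have h3 := hA.conjTranspose_mul_mul_same (U3 k n)
    rw [Matrix.conjTranspose_eq_transpose_of_trivial] at h1 h2 h3
    exact ⟨h1, h2, h3⟩
  · rintro ⟨h1, h2, h3⟩
    refine Matrix.PosSemidef.of_dotProduct_mulVec_nonneg ?_ ?_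
    · show Aᴴ = A
      rw [Matrix.conjTranspose_eq_transpose_of_trivial]
      exact hsym
    · intro x
      have hst : star x = x := funext fun i => star_trivial _
      rw [hst]
      exact PSDaux.main_nonneg hn hsym hinv h1 h2 h3 x
end

section
/- Fix integers n ≥ 2, d ≥ 2 and L ≥ 2 with L ≤ n. If the matrix Q_γ is positive semidefinite for every γ ∈ ℕ^E with Σγ = d−2, then the polynomial f_d is convex on the standard simplex Δ_m. -/
open Finset

/-- The set of `L`-element subsets ("edges") of `[n]`, modeled over `Fin n`. -/
abbrev EdgeT (n L : ℕ) := {e : Finset (Fin n) // e.card = L}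

/-- The polynomial `f_d(x) = Σ_{(e_1,...,e_d) ∈ E^d} ∏_{i=1}^d x_{e_i} / |e_1 ∪ ⋯ ∪ e_i|`. -/
noncomputable def fPoly (n L d : ℕ) (x : EdgeT n L → ℝ) : ℝ :=
  ∑ t : Fin d → EdgeT n L, ∏ i : Fin d,
    x (t i) / ((((Finset.univ.filter fun j : Fin d => j ≤ i)).biUnion fun j => (t j).1).card : ℝ)

/-- The standard simplex `Δ_m ⊆ ℝ^E`. -/
def stdSimplex' (n L : ℕ) : Set (EdgeT n L → ℝ) :=
  {x | (∀ e, 0 ≤ x e) ∧ ∑ e, x e = 1}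

/-- `b_α = Σ ∏_{i=1}^d 1/|e_1 ∪ ⋯ ∪ e_i|`, the sum over all `d`-tuples of edges in which
each edge `e` occurs exactly `α e` times. -/
noncomputable def bcoefF (n L d : ℕ) (α : EdgeT n L → ℕ) : ℝ :=
  ∑ t : Fin d → EdgeT n L,
    if (∀ e, (Finset.univ.filter fun i => t i = e).card = α e) then
      ∏ i : Fin d,
        (1 : ℝ) / ((((Finset.univ.filter fun j : Fin d => j ≤ i)).biUnion
          fun j => (t j).1).card : ℝ)
    else 0

/-- The standard unit vector `v_e ∈ ℕ^E`. -/
def vF (n L : ℕ) (e : EdgeT n L) : EdgeT n L → ℕ := fun f => if f = e then 1 else 0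

/-- The coefficient matrix `Q_γ` of the Hessian of `f_d` in the monomial basis. -/
noncomputable def Qmat (n L d : ℕ) (γ : EdgeT n L → ℕ) : EdgeT n L → EdgeT n L → ℝ :=
  fun i j =>
    if i = j then
      ((γ i + 1) * (γ i + 2) : ℕ) * bcoefF n L d (fun e => γ e + 2 * vF n L i e)
    else
      ((γ i + 1) * (γ j + 1) : ℕ) * bcoefF n L d (fun e => γ e + vF n L i e + vF n L j e)


-- weights
noncomputable def cw (n L d : ℕ) (u : Fin d → EdgeT n L) : ℝ :=
  ∏ i : Fin d,
    (1 : ℝ) / ((((Finset.univ.filter fun j : Fin d => j ≤ i)).biUnion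
      fun j => (u j).1).card : ℝ)

def fib {n L d : ℕ} (u : Fin d → EdgeT n L) (m : EdgeT n L) : ℕ :=
  (Finset.univ.filter fun i => u i = m).card

lemma bcoef_eq (n L d : ℕ) (α : EdgeT n L → ℕ) :
    bcoefF n L d α = ∑ u : Fin d → EdgeT n L,
      if (∀ e, fib u e = α e) then cw n L d u else 0 := rfl

lemma fPoly_eq (n L d : ℕ) (x : EdgeT n L → ℝ) :
    fPoly n L d x = ∑ u : Fin d → EdgeT n L, (∏ i, x (u i)) * cw n L d u := by
  refine Finset.sum_congr rfl fun u _ => ?_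
  rw [cw, ← Finset.prod_mul_distrib]
  exact Finset.prod_congr rfl fun i _ => div_eq_mul_one_div _ _

lemma card_filter_pair {d : ℕ} (p : Fin d → Prop) [DecidablePred p] {i j : Fin d}
    (h : i ≠ j) :
    (({i, j} : Finset (Fin d)).filter p).card
      = (if p i then 1 else 0) + (if p j then 1 else 0) := by
  rw [show ({i, j} : Finset (Fin d)) = insert i {j} from rfl, filter_insert, filter_singleton]
  by_cases hi : p i <;> by_cases hj : p j <;>
    simp [hi, hj, Finset.card_insert_of_notMem, h]

lemma fib_split {n L d : ℕ} {u : Fin d → EdgeT n L} {i j : Fin d} (hij : i ≠ j)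
    (m : EdgeT n L) :
    fib u m = ((Finset.univ \ {i, j}).filter fun k => u k = m).card
      + ((if u i = m then 1 else 0) + (if u j = m then 1 else 0)) := by
  rw [← card_filter_pair (fun k => u k = m) hij, ← Finset.card_union_of_disjoint
    (Finset.disjoint_filter_filter Finset.sdiff_disjoint), ← Finset.filter_union,
    Finset.sdiff_union_of_subset (Finset.subset_univ _)]
  rfl

lemma prod_comp_fiber {n L d : ℕ} (s : Finset (Fin d)) (u : Fin d → EdgeT n L)
    (z : EdgeT n L → ℝ) :
    ∏ k ∈ s, z (u k) = ∏ m : EdgeT n L, z m ^ ((s.filter fun k => u k = m)).card := by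
  rw [← Finset.prod_fiberwise s u fun k => z (u k)]
  refine Finset.prod_congr rfl fun m _ => ?_
  rw [Finset.prod_congr rfl (fun k hk => by rw [(Finset.mem_filter.1 hk).2]), Finset.prod_const]

def Gset (n L d : ℕ) : Finset (EdgeT n L → ℕ) := Finset.piAntidiag Finset.univ (d - 2)

def coefN {n L : ℕ} (γ : EdgeT n L → ℕ) (e f : EdgeT n L) : ℕ :=
  if e = f then (γ e + 1) * (γ e + 2) else (γ e + 1) * (γ f + 1)

lemma Qmat_eq (n L d : ℕ) (γ : EdgeT n L → ℕ) (e f : EdgeT n L) :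
    Qmat n L d γ e f = (coefN γ e f : ℝ) *
      bcoefF n L d (fun m => γ m + vF n L e m + vF n L f m) := by
  unfold Qmat coefN
  by_cases h : e = f
  · subst h
    have hfun : (fun m => γ m + 2 * vF n L e m) = fun m => γ m + vF n L e m + vF n L e m := by
      funext m; unfold vF; split_ifs <;> ring
    simp [hfun]
  · simp [h]

lemma key_pointwise {n L d : ℕ} (z : EdgeT n L → ℝ) (u : Fin d → EdgeT n L)
    (e f : EdgeT n L) :
    ∑ p ∈ (Finset.univ : Finset (Fin d)).offDiag.filter
        (fun p => u p.1 = e ∧ u p.2 = f),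
      ∏ k ∈ Finset.univ \ {p.1, p.2}, z (u k)
    = ∑ γ ∈ Gset n L d,
        if (∀ m, fib u m = γ m + vF n L e m + vF n L f m) then
          (coefN γ e f : ℝ) * ∏ m, z m ^ γ m
        else 0 := by
  classical
  set S := (Finset.univ : Finset (Fin d)).offDiag.filter
      (fun p => u p.1 = e ∧ u p.2 = f) with hS
  have memS : ∀ p, p ∈ S ↔ p.1 ≠ p.2 ∧ u p.1 = e ∧ u p.2 = f := by
    intro p
    simp [hS, Finset.mem_filter, Finset.mem_offDiag, and_assoc]
  rcases S.eq_empty_or_nonempty with hemp | ⟨p₀, hp₀⟩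
  · rw [hemp, Finset.sum_empty]
    symm
    refine Finset.sum_eq_zero fun γ hγ => ?_
    rw [if_neg]
    intro hcond
    by_cases hef : e = f
    · obtain rfl := hef
      have h := hcond e
      rw [show vF n L e e = 1 from if_pos rfl] at h
      obtain ⟨i, hi, j, hj, hij⟩ := Finset.one_lt_card.1
        (show 1 < (Finset.univ.filter fun k => u k = e).card from by
          show 1 < fib u e; omega)
      have : (i, j) ∈ S := (memS (i, j)).2 ⟨hij, (Finset.mem_filter.1 hi).2, (Finset.mem_filter.1 hj).2⟩
      rw [hemp] at this
      exact absurd this (Finset.notMem_empty _)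
    · have hc1 := hcond e
      rw [show vF n L e e = 1 from if_pos rfl,
        show vF n L f e = 0 from if_neg hef] at hc1
      have hc2 := hcond f
      rw [show vF n L e f = 0 from if_neg (fun h => hef h.symm),
        show vF n L f f = 1 from if_pos rfl] at hc2
      obtain ⟨i, hi⟩ := Finset.card_pos.1
        (show 0 < (Finset.univ.filter fun k => u k = e).card from by
          show 0 < fib u e; omega)
      obtain ⟨j, hj⟩ := Finset.card_pos.1
        (show 0 < (Finset.univ.filter fun k => u k = f).card from by
          show 0 < fib u f; omega)
      have hiu : u i = e := (Finset.mem_filter.1 hi).2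
      have hju : u j = f := (Finset.mem_filter.1 hj).2
      have hij : i ≠ j := fun h => hef (by rw [← hiu, ← hju, h])
      have : (i, j) ∈ S := (memS (i, j)).2 ⟨hij, hiu, hju⟩
      rw [hemp] at this
      exact absurd this (Finset.notMem_empty _)
  · obtain ⟨hne, hi, hj⟩ := (memS p₀).1 hp₀
    set γ₀ : EdgeT n L → ℕ :=
      fun m => ((Finset.univ \ {p₀.1, p₀.2}).filter fun k => u k = m).card with hγ₀
    have hind : ∀ (i j : Fin d) (m : EdgeT n L), u i = e → u j = f →
        (if u i = m then 1 else 0) + (if u j = m then 1 else 0)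
          = vF n L e m + vF n L f m := by
      intro i j m hui huj
      rw [hui, huj]
      unfold vF
      simp only [eq_comm]
    have hcond₀ : ∀ m, fib u m = γ₀ m + vF n L e m + vF n L f m := by
      intro m
      rw [fib_split hne m, hind _ _ m hi hj, add_assoc]
    have hγ₀G : γ₀ ∈ Gset n L d := by
      rw [Gset, Finset.mem_piAntidiag]
      refine ⟨?_, fun i _ => Finset.mem_univ i⟩
      rw [show ∑ m, γ₀ m = (Finset.univ \ {p₀.1, p₀.2}).card from
        (Finset.card_eq_sum_card_fiberwise (fun k _ => Finset.mem_univ (u k))).symm]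
      rw [Finset.card_sdiff_of_subset (Finset.subset_univ _), Finset.card_pair hne]
      simp
    have hprod : ∀ p ∈ S, ∏ k ∈ Finset.univ \ {p.1, p.2}, z (u k) = ∏ m, z m ^ γ₀ m := by
      intro p hp
      obtain ⟨hpne, hp1, hp2⟩ := (memS p).1 hp
      rw [prod_comp_fiber]
      refine Finset.prod_congr rfl fun m _ => ?_
      congr 1
      have hA := fib_split (u := u) hpne m
      have hB := hcond₀ m
      rw [hind _ _ m hp1 hp2] at hA
      omega
    have hcard : S.card = coefN γ₀ e f := by
      by_cases hef : e = f
      · obtain rfl := hef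
        have hSeq : S = (Finset.univ.filter fun k => u k = e).offDiag := by
          ext p
          rw [memS, Finset.mem_offDiag]
          simp only [Finset.mem_filter, Finset.mem_univ, true_and]
          tauto
        have h := hcond₀ e
        rw [show vF n L e e = 1 from if_pos rfl] at h
        have hfe : fib u e = γ₀ e + 2 := by omega
        rw [hSeq, Finset.offDiag_card]
        show fib u e * fib u e - fib u e = coefN γ₀ e e
        rw [hfe, coefN, if_pos rfl]
        have : (γ₀ e + 1) * (γ₀ e + 2) + (γ₀ e + 2) = (γ₀ e + 2) * (γ₀ e + 2) := by ring
        omega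
      · have hSeq : S = (Finset.univ.filter fun k => u k = e) ×ˢ
            (Finset.univ.filter fun k => u k = f) := by
          ext p
          rw [memS, Finset.mem_product]
          simp only [Finset.mem_filter, Finset.mem_univ, true_and]
          constructor
          · tauto
          · rintro ⟨h1, h2⟩
            exact ⟨fun h => hef (by rw [← h1, ← h2, h]), h1, h2⟩
        have h1 := hcond₀ e
        rw [show vF n L e e = 1 from if_pos rfl,
          show vF n L f e = 0 from if_neg hef] at h1
        have h2 := hcond₀ f
        rw [show vF n L e f = 0 from if_neg (fun h => hef h.symm),
          show vF n L f f = 1 from if_pos rfl] at h2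
        have hfe : fib u e = γ₀ e + 1 := by omega
        have hff : fib u f = γ₀ f + 1 := by omega
        rw [hSeq, Finset.card_product]
        show fib u e * fib u f = coefN γ₀ e f
        rw [hfe, hff, coefN, if_neg hef]
    rw [Finset.sum_congr rfl hprod, Finset.sum_const,
      Finset.sum_eq_single_of_mem γ₀ hγ₀G, if_pos hcond₀, hcard, nsmul_eq_mul]
    intro γ hγ hne'
    rw [if_neg]
    intro hcond
    apply hne'
    funext m
    have h1 := hcond m
    have h2 := hcond₀ m
    omega

lemma identity (n L d : ℕ) (z b : EdgeT n L → ℝ) :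
    ∑ u : Fin d → EdgeT n L, cw n L d u *
        ∑ p ∈ (Finset.univ : Finset (Fin d)).offDiag,
          b (u p.1) * b (u p.2) * ∏ k ∈ Finset.univ \ {p.1, p.2}, z (u k)
    = ∑ γ ∈ Gset n L d, (∏ m, z m ^ γ m) *
        ∑ e, ∑ f, b e * Qmat n L d γ e f * b f := by
  classical
  set A : (Fin d → EdgeT n L) → EdgeT n L → EdgeT n L → (EdgeT n L → ℕ) → ℝ :=
    fun u e f γ =>
      if (∀ m, fib u m = γ m + vF n L e m + vF n L f m) then
        (coefN γ e f : ℝ) * ∏ m, z m ^ γ m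
      else 0 with hA
  have hR : ∀ γ ∈ Gset n L d, (∏ m, z m ^ γ m) * ∑ e, ∑ f, b e * Qmat n L d γ e f * b f
      = ∑ e, ∑ f, ∑ u : Fin d → EdgeT n L, cw n L d u * (b e * b f * A u e f γ) := by
    intro γ _
    rw [Finset.mul_sum]
    refine Finset.sum_congr rfl fun e _ => ?_
    rw [Finset.mul_sum]
    refine Finset.sum_congr rfl fun f _ => ?_
    rw [Qmat_eq, bcoef_eq]
    simp only [hA, Finset.mul_sum, Finset.sum_mul, mul_ite, ite_mul, mul_zero, zero_mul]
    refine Finset.sum_congr rfl fun u _ => ?_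
    split_ifs with h
    · ring
    · ring
  have hL : ∀ u : Fin d → EdgeT n L,
      cw n L d u * ∑ p ∈ (Finset.univ : Finset (Fin d)).offDiag,
        b (u p.1) * b (u p.2) * ∏ k ∈ Finset.univ \ {p.1, p.2}, z (u k)
      = ∑ e, ∑ f, cw n L d u * (b e * b f * ∑ γ ∈ Gset n L d, A u e f γ) := by
    intro u
    have fib1 : ∑ p ∈ (Finset.univ : Finset (Fin d)).offDiag,
        b (u p.1) * b (u p.2) * ∏ k ∈ Finset.univ \ {p.1, p.2}, z (u k)
        = ∑ w : EdgeT n L × EdgeT n L,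
            ∑ p ∈ (Finset.univ : Finset (Fin d)).offDiag.filter
              (fun p => (u p.1, u p.2) = w),
              b (u p.1) * b (u p.2) * ∏ k ∈ Finset.univ \ {p.1, p.2}, z (u k) := by
      rw [Finset.sum_fiberwise_of_maps_to (fun p _ => Finset.mem_univ ((u p.1, u p.2)))]
    rw [fib1, Fintype.sum_prod_type, Finset.mul_sum]
    refine Finset.sum_congr rfl fun e _ => ?_
    rw [Finset.mul_sum]
    refine Finset.sum_congr rfl fun f _ => ?_
    have hfe : (Finset.univ : Finset (Fin d)).offDiag.filter
        (fun p => (u p.1, u p.2) = (e, f))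
        = (Finset.univ : Finset (Fin d)).offDiag.filter
          (fun p => u p.1 = e ∧ u p.2 = f) := by
      refine Finset.filter_congr fun p _ => ?_
      simp [Prod.ext_iff]
    rw [hfe]
    have hbb : ∑ p ∈ (Finset.univ : Finset (Fin d)).offDiag.filter
          (fun p => u p.1 = e ∧ u p.2 = f),
        b (u p.1) * b (u p.2) * ∏ k ∈ Finset.univ \ {p.1, p.2}, z (u k)
        = b e * b f * ∑ p ∈ (Finset.univ : Finset (Fin d)).offDiag.filter
          (fun p => u p.1 = e ∧ u p.2 = f),
          ∏ k ∈ Finset.univ \ {p.1, p.2}, z (u k) := by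
      rw [Finset.mul_sum]
      refine Finset.sum_congr rfl fun p hp => ?_
      obtain ⟨-, h1, h2⟩ := Finset.mem_filter.1 hp
      rw [h1, h2]
    rw [hbb, key_pointwise z u e f]
  calc ∑ u : Fin d → EdgeT n L, cw n L d u *
        ∑ p ∈ (Finset.univ : Finset (Fin d)).offDiag,
          b (u p.1) * b (u p.2) * ∏ k ∈ Finset.univ \ {p.1, p.2}, z (u k)
      = ∑ u : Fin d → EdgeT n L, ∑ e, ∑ f, cw n L d u *
          (b e * b f * ∑ γ ∈ Gset n L d, A u e f γ) := Finset.sum_congr rfl fun u _ => hL u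
    _ = ∑ e, ∑ u : Fin d → EdgeT n L, ∑ f, cw n L d u *
          (b e * b f * ∑ γ ∈ Gset n L d, A u e f γ) := Finset.sum_comm
    _ = ∑ e, ∑ f, ∑ u : Fin d → EdgeT n L, cw n L d u *
          (b e * b f * ∑ γ ∈ Gset n L d, A u e f γ) :=
        Finset.sum_congr rfl fun e _ => Finset.sum_comm
    _ = ∑ e, ∑ f, ∑ u : Fin d → EdgeT n L, ∑ γ ∈ Gset n L d, cw n L d u *
          (b e * b f * A u e f γ) := by
        refine Finset.sum_congr rfl fun e _ => Finset.sum_congr rfl fun f _ =>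
          Finset.sum_congr rfl fun u _ => ?_
        rw [Finset.mul_sum, Finset.mul_sum]
    _ = ∑ e, ∑ f, ∑ γ ∈ Gset n L d, ∑ u : Fin d → EdgeT n L, cw n L d u *
          (b e * b f * A u e f γ) :=
        Finset.sum_congr rfl fun e _ => Finset.sum_congr rfl fun f _ => Finset.sum_comm
    _ = ∑ e, ∑ γ ∈ Gset n L d, ∑ f, ∑ u : Fin d → EdgeT n L, cw n L d u *
          (b e * b f * A u e f γ) :=
        Finset.sum_congr rfl fun e _ => Finset.sum_comm
    _ = ∑ γ ∈ Gset n L d, ∑ e, ∑ f, ∑ u : Fin d → EdgeT n L, cw n L d u *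
          (b e * b f * A u e f γ) := Finset.sum_comm
    _ = ∑ γ ∈ Gset n L d, (∏ m, z m ^ γ m) *
        ∑ e, ∑ f, b e * Qmat n L d γ e f * b f :=
        (Finset.sum_congr rfl hR).symm

lemma second_nonneg (n L d : ℕ) (z b : EdgeT n L → ℝ) (hz : ∀ e, 0 ≤ z e)
    (hQ : ∀ γ : EdgeT n L → ℕ, (∑ e, γ e = d - 2) →
      ∀ y : EdgeT n L → ℝ, 0 ≤ ∑ i : EdgeT n L, ∑ j : EdgeT n L,
        y i * Qmat n L d γ i j * y j) :
    0 ≤ ∑ u : Fin d → EdgeT n L, cw n L d u *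
        ∑ p ∈ (Finset.univ : Finset (Fin d)).offDiag,
          b (u p.1) * b (u p.2) * ∏ k ∈ Finset.univ \ {p.1, p.2}, z (u k) := by
  rw [identity n L d z b]
  refine Finset.sum_nonneg fun γ hγ => ?_
  have hsum : ∑ e, γ e = d - 2 := by
    rw [Gset, Finset.mem_piAntidiag] at hγ
    exact hγ.1
  exact mul_nonneg (Finset.prod_nonneg fun m _ => pow_nonneg (hz m) _) (hQ γ hsum b)

lemma derivative_finset_prod {ι : Type*} [DecidableEq ι] (s : Finset ι)
    (f : ι → Polynomial ℝ) :
    Polynomial.derivative (∏ i ∈ s, f i)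
      = ∑ i ∈ s, (∏ j ∈ s.erase i, f j) * Polynomial.derivative (f i) := by
  induction s using Finset.induction_on with
  | empty => simp
  | @insert a s ha ih =>
    rw [Finset.prod_insert ha, Polynomial.derivative_mul, ih, Finset.sum_insert ha,
      Finset.erase_insert ha, Finset.mul_sum]
    congr 1
    · exact mul_comm _ _
    · refine Finset.sum_congr rfl fun i hi => ?_
      have hia : i ≠ a := fun h => ha (h ▸ hi)
      rw [Finset.erase_insert_of_ne hia.symm, Finset.prod_insert
        (fun h => ha (Finset.mem_of_mem_erase h)), mul_assoc]

noncomputable def linP {n L d : ℕ} (a b : EdgeT n L → ℝ) (u : Fin d → EdgeT n L)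
    (i : Fin d) : Polynomial ℝ :=
  Polynomial.C (a (u i)) + Polynomial.C (b (u i)) * Polynomial.X

noncomputable def Pab (n L d : ℕ) (a b : EdgeT n L → ℝ) : Polynomial ℝ :=
  ∑ u : Fin d → EdgeT n L, Polynomial.C (cw n L d u) * ∏ i, linP a b u i

lemma derivative_linP {n L d : ℕ} (a b : EdgeT n L → ℝ) (u : Fin d → EdgeT n L)
    (i : Fin d) : Polynomial.derivative (linP a b u i) = Polynomial.C (b (u i)) := by
  unfold linP
  rw [Polynomial.derivative_add, Polynomial.derivative_C, Polynomial.derivative_C_mul,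
    Polynomial.derivative_X, mul_one, zero_add]

lemma derivative_Pab (n L d : ℕ) (a b : EdgeT n L → ℝ) :
    Polynomial.derivative (Pab n L d a b)
      = ∑ u : Fin d → EdgeT n L, Polynomial.C (cw n L d u) *
          ∑ i, (∏ j ∈ Finset.univ.erase i, linP a b u j) * Polynomial.C (b (u i)) := by
  unfold Pab
  rw [Polynomial.derivative_sum]
  refine Finset.sum_congr rfl fun u _ => ?_
  rw [Polynomial.derivative_C_mul, derivative_finset_prod]
  congr 1
  exact Finset.sum_congr rfl fun i _ => by rw [derivative_linP]

lemma derivative2_Pab (n L d : ℕ) (a b : EdgeT n L → ℝ) :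
    Polynomial.derivative (Polynomial.derivative (Pab n L d a b))
      = ∑ u : Fin d → EdgeT n L, Polynomial.C (cw n L d u) *
          ∑ i, (∑ j ∈ Finset.univ.erase i,
            (∏ k ∈ (Finset.univ.erase i).erase j, linP a b u k)
              * Polynomial.C (b (u j))) * Polynomial.C (b (u i)) := by
  rw [derivative_Pab, Polynomial.derivative_sum]
  refine Finset.sum_congr rfl fun u _ => ?_
  rw [Polynomial.derivative_C_mul, Polynomial.derivative_sum]
  congr 1
  refine Finset.sum_congr rfl fun i _ => ?_
  rw [Polynomial.derivative_mul, Polynomial.derivative_C, mul_zero, add_zero,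
    derivative_finset_prod]
  congr 1
  exact Finset.sum_congr rfl fun j _ => by rw [derivative_linP]

lemma sum_offDiag_eq {d : ℕ} {M : Type*} [AddCommMonoid M] (F : Fin d → Fin d → M) :
    ∑ p ∈ (Finset.univ : Finset (Fin d)).offDiag, F p.1 p.2
      = ∑ i, ∑ j ∈ Finset.univ.erase i, F i j := by
  rw [show (Finset.univ : Finset (Fin d)).offDiag = (Finset.univ ×ˢ Finset.univ).filter
    (fun a : Fin d × Fin d => a.1 ≠ a.2) from by ext; simp [Finset.mem_offDiag],
    Finset.sum_filter, Finset.sum_product]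
  refine Finset.sum_congr rfl fun i _ => ?_
  rw [← Finset.sum_filter]
  refine Finset.sum_congr ?_ fun j _ => rfl
  rw [← Finset.filter_ne']
  exact Finset.filter_congr fun j _ => by simp [ne_comm]

lemma sdiff_pair {d : ℕ} (i j : Fin d) :
    (Finset.univ : Finset (Fin d)) \ {i, j} = (Finset.univ.erase i).erase j := by
  ext k
  simp only [Finset.mem_sdiff, Finset.mem_univ, true_and, Finset.mem_insert,
    Finset.mem_singleton, Finset.mem_erase]
  tauto

lemma eval2_Pab (n L d : ℕ) (a b : EdgeT n L → ℝ) (r : ℝ) :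
    (Polynomial.derivative (Polynomial.derivative (Pab n L d a b))).eval r
      = ∑ u : Fin d → EdgeT n L, cw n L d u *
          ∑ p ∈ (Finset.univ : Finset (Fin d)).offDiag,
            b (u p.1) * b (u p.2) *
              ∏ k ∈ Finset.univ \ {p.1, p.2}, (a (u k) + b (u k) * r) := by
  rw [derivative2_Pab]
  rw [Polynomial.eval_finset_sum]
  refine Finset.sum_congr rfl fun u _ => ?_
  rw [Polynomial.eval_mul, Polynomial.eval_C]
  congr 1
  rw [Polynomial.eval_finset_sum, sum_offDiag_eq (fun i j => b (u i) * b (u j) *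
    ∏ k ∈ Finset.univ \ {i, j}, (a (u k) + b (u k) * r))]
  refine Finset.sum_congr rfl fun i _ => ?_
  rw [Polynomial.eval_mul, Polynomial.eval_C, Polynomial.eval_finset_sum, Finset.sum_mul]
  refine Finset.sum_congr rfl fun j hj => ?_
  rw [Polynomial.eval_mul, Polynomial.eval_C, Polynomial.eval_prod, sdiff_pair]
  have : ∀ k, (linP a b u k).eval r = a (u k) + b (u k) * r := by
    intro k
    simp [linP]
  rw [Finset.prod_congr rfl fun k _ => this k]
  ring

lemma eval_Pab (n L d : ℕ) (a b : EdgeT n L → ℝ) (r : ℝ) :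
    (Pab n L d a b).eval r = fPoly n L d (fun e => a e + b e * r) := by
  rw [fPoly_eq, Pab, Polynomial.eval_finset_sum]
  refine Finset.sum_congr rfl fun u _ => ?_
  rw [Polynomial.eval_mul, Polynomial.eval_C, Polynomial.eval_prod]
  rw [Finset.prod_congr rfl fun i _ => (by simp [linP] : (linP a b u i).eval r = a (u i) + b (u i) * r)]
  exact mul_comm _ _


/-- If every coefficient matrix `Q_γ` (for `Σγ = d−2`) is positive semidefinite, then
`f_d` is convex on the standard simplex. -/
theorem fPoly_convexOn_of_Qmat_PSD (n L d : ℕ) (hn : 2 ≤ n) (hL : 2 ≤ L) (hLn : L ≤ n)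
    (hd : 2 ≤ d)
    (hQ : ∀ γ : EdgeT n L → ℕ, (∑ e, γ e = d - 2) →
      ∀ y : EdgeT n L → ℝ, 0 ≤ ∑ i : EdgeT n L, ∑ j : EdgeT n L, y i * Qmat n L d γ i j * y j) :
    ConvexOn ℝ (stdSimplex' n L) (fPoly n L d) := by
  constructor
  · exact convex_stdSimplex ℝ (EdgeT n L)
  · intro x hx y hy s t hs ht hst
    set b : EdgeT n L → ℝ := fun e => y e - x e with hb
    set P : Polynomial ℝ := Pab n L d x b with hP
    have hderiv : deriv (fun r => P.eval r)
        = fun r => (Polynomial.derivative P).eval r :=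
      funext fun r => Polynomial.deriv P
    have hconv : ConvexOn ℝ (Set.Icc (0 : ℝ) 1) (fun r => P.eval r) := by
      refine convexOn_of_deriv2_nonneg (convex_Icc 0 1)
        (P.continuous_aeval.continuousOn) ?_ ?_ ?_
      · exact (P.differentiable_aeval).differentiableOn
      · rw [hderiv]
        exact ((Polynomial.derivative P).differentiable_aeval).differentiableOn
      · intro r hr
        rw [interior_Icc, Set.mem_Ioo] at hr
        have h2 : deriv^[2] (fun r => P.eval r)
            = fun r => (Polynomial.derivative (Polynomial.derivative P)).eval r := by
          show deriv (deriv (fun r => P.eval r)) = _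
          rw [hderiv]
          exact funext fun r => Polynomial.deriv _
        rw [h2]
        show 0 ≤ (Polynomial.derivative (Polynomial.derivative (Pab n L d x b))).eval r
        rw [eval2_Pab]
        refine second_nonneg n L d (fun e => x e + b e * r) b ?_ hQ
        intro e
        have h1 := hx.1 e
        have h2 := hy.1 e
        show 0 ≤ x e + b e * r
        have : x e + b e * r = (1 - r) * x e + r * y e := by rw [hb]; ring
        rw [this]
        have hr1 : (0:ℝ) ≤ 1 - r := by linarith [hr.2]
        nlinarith [hr.1.le]
    have h0 : (0 : ℝ) ∈ Set.Icc (0:ℝ) 1 := Set.mem_Icc.2 ⟨le_refl 0, zero_le_one⟩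
    have h1 : (1 : ℝ) ∈ Set.Icc (0:ℝ) 1 := Set.mem_Icc.2 ⟨zero_le_one, le_refl 1⟩
    have key0 := hconv.2 h0 h1 hs ht hst
    have hst' : s • (0:ℝ) + t • (1:ℝ) = t := by simp
    rw [hst'] at key0
    have key : P.eval t ≤ s * P.eval 0 + t * P.eval 1 := by
      simpa using key0
    have e0 : P.eval 0 = fPoly n L d x := by
      rw [hP, eval_Pab]
      congr 1
      funext e
      ring
    have e1 : P.eval 1 = fPoly n L d y := by
      rw [hP, eval_Pab]
      congr 1
      funext e
      rw [hb]
      ring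
    have et : P.eval t = fPoly n L d (s • x + t • y) := by
      rw [hP, eval_Pab]
      congr 1
      funext e
      have hs1 : s = 1 - t := by linarith
      simp only [Pi.add_apply, Pi.smul_apply, smul_eq_mul, hb]
      rw [hs1]
      ring
    rw [et, e0, e1] at key
    simpa using key
end
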